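/- arXiv:0910.2085 — 7 statements merged into one kernel-verified Lean document; each statement's English description precedes it below -/
import Mathlib

section
/- The energy operator E = Σ_{α≥1} u^{i,α} p_{i,α,0} − 1 on the differential polynomial algebra 𝒜 annihilates the image of the total derivative: E ∘ ∂ = 0. Moreover, ∂ ∘ E = −Σ_i u^{i,1} δ_i, where δ_i = Σ_{t≥0} (−∂)^t ∂_{i,t} is the variational derivative. -/
open MvPolynomial

/-- The differential polynomial algebra `𝒜` in the variables `u^{i,s}`,
`1 ≤ i ≤ n`, `s ≥ 0`. -/
abbrev DP (n : ℕ) : Type := MvPolynomial (Fin n × ℕ) ℝ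

/-- The total derivative `∂ = Σ u^{i,s+1} ∂_{i,s}` (on each differential
polynomial only finitely many terms act nontrivially). -/
noncomputable def totalDer {n : ℕ} (f : DP n) : DP n :=
  ∑ v ∈ f.vars, X (v.1, v.2 + 1) * pderiv v f

/-- A bound such that `∂_{i,k} f = 0` for all `k ≥ vbound f`. -/
noncomputable def vbound {n : ℕ} (f : DP n) : ℕ := (f.vars.sup (fun v => v.2)) + 1

/-- The higher generalized momentum operator
`p_{i,α,s} = Σ_{t≥0} (-1)^t C(t+s,s) ∂^t ∘ ∂_{i,α+s+t}`; the sum is finite on each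
differential polynomial, and is truncated at a sufficiently large bound. -/
noncomputable def pmom {n : ℕ} (i : Fin n) (α s : ℕ) (f : DP n) : DP n :=
  ∑ t ∈ Finset.range (vbound f),
    ((-1 : ℝ) ^ t * (Nat.choose (t + s) s : ℝ)) • totalDer^[t] (pderiv (i, α + s + t) f)

/-- The higher energy operator `E_s = Σ_{α≥1} u^{i,α} p_{i,α,s}`. -/
noncomputable def Eop {n : ℕ} (s : ℕ) (f : DP n) : DP n :=
  ∑ i : Fin n, ∑ α ∈ Finset.Icc 1 (vbound f), X (i, α) * pmom i α s f

/-- The energy operator `E = E₀ - 1`. -/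
noncomputable def Ener {n : ℕ} (f : DP n) : DP n := Eop 0 f - f

namespace EnergyAux

variable {n : ℕ}

/-- The total derivative, as a bundled derivation. -/
noncomputable def DD (n : ℕ) : Derivation ℝ (DP n) (DP n) :=
  mkDerivation ℝ fun v : Fin n × ℕ => X (v.1, v.2 + 1)

lemma totalDer_eq_sum (f : DP n) {S : Finset (Fin n × ℕ)} (h : f.vars ⊆ S) :
    totalDer f = ∑ v ∈ S, X (v.1, v.2 + 1) * pderiv v f :=
  Finset.sum_subset h fun v _ hv => by
    rw [pderiv_eq_zero_of_notMem_vars hv, mul_zero]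

lemma totalDer_add (f g : DP n) : totalDer (f + g) = totalDer f + totalDer g := by
  classical
  rw [totalDer_eq_sum (f + g) (S := f.vars ∪ g.vars ∪ (f + g).vars)
        (fun v hv => Finset.mem_union_right _ hv),
      totalDer_eq_sum f (S := f.vars ∪ g.vars ∪ (f + g).vars)
        (fun v hv => Finset.mem_union_left _ (Finset.mem_union_left _ hv)),
      totalDer_eq_sum g (S := f.vars ∪ g.vars ∪ (f + g).vars)
        (fun v hv => Finset.mem_union_left _ (Finset.mem_union_right _ hv)),
      ← Finset.sum_add_distrib]
  exact Finset.sum_congr rfl fun v _ => by rw [map_add, mul_add]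

lemma totalDer_eq_DD (f : DP n) : totalDer f = DD n f := by
  classical
  induction f using MvPolynomial.induction_on with
  | C a =>
      have h1 : totalDer (C a : DP n) = 0 := by
        rw [totalDer, vars_C, Finset.sum_empty]
      rw [h1, derivation_C]
  | add p q hp hq => rw [totalDer_add, hp, hq, map_add]
  | mul_X p v hp =>
      rw [totalDer_eq_sum (p * X v) (S := (p * X v).vars ∪ p.vars ∪ {v})
            (fun w hw => Finset.mem_union_left _ (Finset.mem_union_left _ hw))]
      have key : ∀ w : Fin n × ℕ,
          X (w.1, w.2 + 1) * pderiv w (p * X v)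
            = (X (w.1, w.2 + 1) * pderiv w p) * X v
              + X (w.1, w.2 + 1) * (p * pderiv w (X v)) := by
        intro w; rw [pderiv_mul]; ring
      rw [Finset.sum_congr rfl fun w _ => key w, Finset.sum_add_distrib]
      have h2 : ∑ w ∈ (p * X v).vars ∪ p.vars ∪ {v},
          (X (w.1, w.2 + 1) * pderiv w p) * X v = totalDer p * X v := by
        rw [← Finset.sum_mul, ← totalDer_eq_sum p
            (fun w hw => Finset.mem_union_left _ (Finset.mem_union_right _ hw))]
      have h3 : ∑ w ∈ (p * X v).vars ∪ p.vars ∪ {v},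
          X (w.1, w.2 + 1) * (p * pderiv w (X v))
            = X (v.1, v.2 + 1) * (p * pderiv v (X v)) := by
        refine Finset.sum_eq_single_of_mem v
          (Finset.mem_union_right _ (Finset.mem_singleton_self v)) fun w _ hw => ?_
        rw [pderiv_X_of_ne (Ne.symm hw), mul_zero, mul_zero]
      rw [h2, h3, pderiv_X_self, mul_one, hp]
      rw [Derivation.leibniz, smul_eq_mul, smul_eq_mul]
      have h4 : DD n (X v : DP n) = X (v.1, v.2 + 1) := mkDerivation_X _ _ _
      rw [h4]; ring

lemma totalDer_zero : totalDer (0 : DP n) = 0 := by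
  rw [totalDer_eq_DD]; exact map_zero _

lemma totalDer_smul (c : ℝ) (f : DP n) : totalDer (c • f) = c • totalDer f := by
  rw [totalDer_eq_DD, totalDer_eq_DD]; exact (DD n).map_smul c f

lemma totalDer_sub (f g : DP n) : totalDer (f - g) = totalDer f - totalDer g := by
  rw [totalDer_eq_DD, totalDer_eq_DD, totalDer_eq_DD]; exact map_sub _ _ _

lemma totalDer_sum {ι : Type*} (s : Finset ι) (g : ι → DP n) :
    totalDer (∑ x ∈ s, g x) = ∑ x ∈ s, totalDer (g x) := by
  classical
  induction s using Finset.induction_on with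
  | empty => simp [totalDer_zero]
  | insert a s hx ih => rw [Finset.sum_insert hx, Finset.sum_insert hx, totalDer_add, ih]

lemma totalDer_X_mul (v : Fin n × ℕ) (p : DP n) :
    totalDer (X v * p) = X (v.1, v.2 + 1) * p + X v * totalDer p := by
  rw [totalDer_eq_DD, totalDer_eq_DD, Derivation.leibniz, smul_eq_mul, smul_eq_mul]
  have h4 : DD n (X v : DP n) = X (v.1, v.2 + 1) := mkDerivation_X _ _ _
  rw [h4]; ring

lemma iter_zero (t : ℕ) : totalDer^[t] (0 : DP n) = 0 := by
  induction t with
  | zero => rfl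
  | succ t ih => rw [Function.iterate_succ_apply, totalDer_zero, ih]

lemma iter_add (t : ℕ) : ∀ a b : DP n,
    totalDer^[t] (a + b) = totalDer^[t] a + totalDer^[t] b := by
  induction t with
  | zero => intro a b; rfl
  | succ t ih =>
      intro a b
      rw [Function.iterate_succ_apply, Function.iterate_succ_apply,
        Function.iterate_succ_apply, totalDer_add, ih]

lemma pderiv_pderiv (v w : Fin n × ℕ) (f : DP n) :
    pderiv v (pderiv w f) = pderiv w (pderiv v f) := by
  induction f using MvPolynomial.induction_on' with
  | add p q hp hq => simp only [map_add, hp, hq]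
  | monomial s a =>
      simp only [pderiv_monomial]
      rcases eq_or_ne v w with rfl | hvw
      · rfl
      · rw [Finsupp.tsub_apply, Finsupp.tsub_apply,
          Finsupp.single_eq_of_ne hvw, Finsupp.single_eq_of_ne (Ne.symm hvw),
          tsub_right_comm, Nat.sub_zero, Nat.sub_zero, mul_right_comm]

lemma pderiv_vanish {f : DP n} {i : Fin n} {k : ℕ} (h : vbound f ≤ k) :
    pderiv (i, k) f = 0 := by
  apply pderiv_eq_zero_of_notMem_vars
  intro hm
  have h1 : k ≤ f.vars.sup (fun v => v.2) := Finset.le_sup (f := fun v => v.2) hm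
  rw [vbound] at h
  omega

lemma pderiv_totalDer_zero (i : Fin n) (f : DP n) :
    pderiv (i, 0) (totalDer f) = totalDer (pderiv (i, 0) f) := by
  classical
  set S : Finset (Fin n × ℕ) := f.vars ∪ (pderiv (i, 0) f).vars with hS
  have hf : f.vars ⊆ S := fun w hw => Finset.mem_union_left _ hw
  have hd : (pderiv (i, 0) f).vars ⊆ S := fun w hw => Finset.mem_union_right _ hw
  rw [totalDer_eq_sum f hf, map_sum, totalDer_eq_sum _ hd]
  refine Finset.sum_congr rfl fun w _ => ?_
  rw [pderiv_mul, pderiv_pderiv, pderiv_X_of_ne, zero_mul, zero_add]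
  intro hc
  exact Nat.succ_ne_zero w.2 (congrArg Prod.snd hc)

lemma pderiv_totalDer (i : Fin n) (k : ℕ) (f : DP n) :
    pderiv (i, k + 1) (totalDer f)
      = totalDer (pderiv (i, k + 1) f) + pderiv (i, k) f := by
  classical
  set S : Finset (Fin n × ℕ) := f.vars ∪ (pderiv (i, k + 1) f).vars ∪ {(i, k)} with hS
  have hf : f.vars ⊆ S :=
    fun w hw => Finset.mem_union_left _ (Finset.mem_union_left _ hw)
  have hd : (pderiv (i, k + 1) f).vars ⊆ S :=
    fun w hw => Finset.mem_union_left _ (Finset.mem_union_right _ hw)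
  have hm : (i, k) ∈ S := Finset.mem_union_right _ (Finset.mem_singleton_self _)
  rw [totalDer_eq_sum f hf, map_sum, totalDer_eq_sum _ hd]
  have key : ∀ w : Fin n × ℕ,
      pderiv (i, k + 1) (X (w.1, w.2 + 1) * pderiv w f)
        = pderiv (i, k + 1) (X (w.1, w.2 + 1)) * pderiv w f
          + X (w.1, w.2 + 1) * pderiv w (pderiv (i, k + 1) f) := by
    intro w; rw [pderiv_mul, pderiv_pderiv]
  rw [Finset.sum_congr rfl fun w _ => key w, Finset.sum_add_distrib]
  have h1 : ∑ w ∈ S, pderiv (i, k + 1) (X (w.1, w.2 + 1) : DP n) * pderiv w f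
      = pderiv (i, k) f := by
    rw [Finset.sum_eq_single_of_mem (i, k) hm]
    · rw [show (((i, k) : Fin n × ℕ).1, ((i, k) : Fin n × ℕ).2 + 1) = (i, k + 1) from rfl,
        pderiv_X_self, one_mul]
    · intro w _ hw
      rw [pderiv_X_of_ne, zero_mul]
      intro hc
      apply hw
      have ha : w.1 = i := congrArg Prod.fst hc
      have hb : w.2 + 1 = k + 1 := congrArg Prod.snd hc
      have hb' : w.2 = k := by omega
      exact Prod.ext ha hb'
  rw [h1, add_comm]

lemma pmom_zero_eq (i : Fin n) (α : ℕ) (f : DP n) {N : ℕ} (h : vbound f ≤ N) :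
    pmom i α 0 f
      = ∑ t ∈ Finset.range N, ((-1 : ℝ) ^ t) • totalDer^[t] (pderiv (i, α + t) f) := by
  rw [pmom]
  simp only [Nat.choose_zero_right, Nat.cast_one, mul_one, add_zero]
  refine Finset.sum_subset (Finset.range_subset_range.2 h) fun t _ ht => ?_
  rw [pderiv_vanish (by simp only [Finset.mem_range, not_lt] at ht; omega), iter_zero,
    smul_zero]

lemma pmom_zero_of_le {f : DP n} (i : Fin n) (s : ℕ) {α : ℕ} (h : vbound f ≤ α) :
    pmom i α s f = 0 := by
  rw [pmom]
  refine Finset.sum_eq_zero fun t _ => ?_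
  rw [pderiv_vanish (by omega), iter_zero, smul_zero]

/-- The basic telescoping identity. -/
lemma telescope (i : Fin n) (α : ℕ) (f : DP n) {N : ℕ} (h : vbound f ≤ N) :
    ∑ t ∈ Finset.range N, ((-1 : ℝ) ^ t) • totalDer^[t + 1] (pderiv (i, α + 1 + t) f)
      = pderiv (i, α) f
        - ∑ t ∈ Finset.range N, ((-1 : ℝ) ^ t) • totalDer^[t] (pderiv (i, α + t) f) := by
  have h1 := Finset.sum_range_succ'
    (fun t => ((-1 : ℝ) ^ t) • totalDer^[t] (pderiv (i, α + t) f)) N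
  have h2 := Finset.sum_range_succ
    (fun t => ((-1 : ℝ) ^ t) • totalDer^[t] (pderiv (i, α + t) f)) N
  have hz : pderiv (i, α + N) f = 0 := pderiv_vanish (by omega)
  rw [hz, iter_zero, smul_zero, add_zero] at h2
  have h3 : ∀ t : ℕ, ((-1 : ℝ) ^ (t + 1)) • totalDer^[t + 1] (pderiv (i, α + (t + 1)) f)
      = -(((-1 : ℝ) ^ t) • totalDer^[t + 1] (pderiv (i, α + 1 + t) f)) := by
    intro t
    rw [show α + (t + 1) = α + 1 + t from by omega, pow_succ, mul_smul, neg_one_smul,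
      smul_neg]
  rw [Finset.sum_congr rfl fun t _ => h3 t] at h1
  simp only [pow_zero, one_smul, Function.iterate_zero, id_eq, add_zero] at h1
  rw [Finset.sum_neg_distrib] at h1
  linear_combination h1 - h2

lemma td_pmom (i : Fin n) (α : ℕ) (f : DP n) :
    totalDer (pmom i (α + 1) 0 f) = pderiv (i, α) f - pmom i α 0 f := by
  rw [pmom_zero_eq i (α + 1) f (le_refl (vbound f)), totalDer_sum]
  rw [pmom_zero_eq i α f (le_refl (vbound f))]
  rw [← telescope i α f (le_refl (vbound f))]
  refine Finset.sum_congr rfl fun t _ => ?_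
  rw [totalDer_smul, ← Function.iterate_succ_apply' totalDer t]

lemma pmom_td_succ (i : Fin n) (α : ℕ) (f : DP n) :
    pmom i (α + 1) 0 (totalDer f) = pderiv (i, α) f := by
  set N := max (vbound (totalDer f)) (vbound f) with hN
  rw [pmom_zero_eq i (α + 1) (totalDer f) (le_max_left _ _)]
  have step : ∀ t : ℕ, pderiv (i, α + 1 + t) (totalDer f)
      = totalDer (pderiv (i, α + 1 + t) f) + pderiv (i, α + t) f := by
    intro t
    rw [show α + 1 + t = (α + t) + 1 from by omega]
    exact pderiv_totalDer i (α + t) f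
  have expand : ∑ t ∈ Finset.range N,
        ((-1 : ℝ) ^ t) • totalDer^[t] (pderiv (i, α + 1 + t) (totalDer f))
      = (∑ t ∈ Finset.range N, ((-1 : ℝ) ^ t) • totalDer^[t + 1] (pderiv (i, α + 1 + t) f))
        + ∑ t ∈ Finset.range N, ((-1 : ℝ) ^ t) • totalDer^[t] (pderiv (i, α + t) f) := by
    rw [← Finset.sum_add_distrib]
    refine Finset.sum_congr rfl fun t _ => ?_
    rw [step t, iter_add, smul_add, ← Function.iterate_succ_apply totalDer t]
  rw [expand, telescope i α f (le_max_right _ _)]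
  ring

lemma pmom_td_zero (i : Fin n) (f : DP n) :
    pmom i 0 0 (totalDer f) = 0 := by
  set M := max (vbound (totalDer f)) (vbound f) with hM
  have hb : vbound (totalDer f) ≤ M + 1 := le_trans (le_max_left _ _) (Nat.le_succ _)
  rw [pmom_zero_eq i 0 (totalDer f) hb]
  simp only [zero_add]
  rw [Finset.sum_range_succ']
  set g : ℕ → DP n := fun t => ((-1 : ℝ) ^ t) • totalDer^[t + 1] (pderiv (i, t) f) with hg
  have e1 := Finset.sum_range_succ' g M
  have e2 := Finset.sum_range_succ g M
  have hgM : g M = 0 := by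
    rw [hg]
    simp only
    rw [pderiv_vanish (le_max_right _ _), iter_zero, smul_zero]
  rw [hgM, add_zero] at e2
  have hterm : ∀ t : ℕ,
      ((-1 : ℝ) ^ (t + 1)) • totalDer^[t + 1] (pderiv (i, t + 1) (totalDer f))
        = g (t + 1) - g t := by
    intro t
    rw [pderiv_totalDer i t f, iter_add, hg]
    simp only
    rw [← Function.iterate_succ_apply totalDer (t + 1) (pderiv (i, t + 1) f)]
    module
  rw [Finset.sum_congr rfl fun t _ => hterm t, Finset.sum_sub_distrib]
  have hzero : ((-1 : ℝ) ^ 0) • totalDer^[0] (pderiv (i, 0) (totalDer f)) = g 0 := by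
    rw [pderiv_totalDer_zero i f, hg]
    simp
  rw [hzero]
  linear_combination e2 - e1

lemma td_double (f : DP n) {M : ℕ} (h : vbound f ≤ M) :
    totalDer f = ∑ i : Fin n, ∑ s ∈ Finset.range M, X (i, s + 1) * pderiv (i, s) f := by
  classical
  have hsub : f.vars ⊆ Finset.univ ×ˢ Finset.range M := by
    intro v hv
    rw [Finset.mem_product]
    refine ⟨Finset.mem_univ _, Finset.mem_range.2 ?_⟩
    have h1 : v.2 ≤ f.vars.sup (fun v => v.2) := Finset.le_sup (f := fun v => v.2) hv
    rw [vbound] at h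
    omega
  rw [totalDer_eq_sum f hsub, Finset.sum_product]

lemma Eop_td (f : DP n) : Eop 0 (totalDer f) = totalDer f := by
  classical
  set M := max (vbound (totalDer f)) (vbound f) with hM
  rw [Eop]
  have hext : ∀ i : Fin n,
      ∑ α ∈ Finset.Icc 1 (vbound (totalDer f)), X (i, α) * pmom i α 0 (totalDer f)
        = ∑ α ∈ Finset.Icc 1 M, X (i, α) * pmom i α 0 (totalDer f) := by
    intro i
    refine Finset.sum_subset (Finset.Icc_subset_Icc_right (le_max_left _ _))
      fun α hα hα' => ?_
    have h1 : vbound (totalDer f) ≤ α := by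
      simp only [Finset.mem_Icc] at hα hα'
      omega
    rw [pmom_zero_of_le i 0 h1, mul_zero]
  have hinner : ∀ i : Fin n,
      ∑ α ∈ Finset.Icc 1 M, X (i, α) * pmom i α 0 (totalDer f)
        = ∑ s ∈ Finset.range M, X (i, s + 1) * pderiv (i, s) f := by
    intro i
    rw [← Finset.Ico_add_one_right_eq_Icc, Finset.sum_Ico_eq_sum_range]
    simp only [Nat.add_sub_cancel]
    refine Finset.sum_congr rfl fun s _ => ?_
    rw [show 1 + s = s + 1 from Nat.add_comm 1 s, pmom_td_succ]
  rw [Finset.sum_congr rfl fun i _ => (hext i).trans (hinner i)]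
  exact (td_double f (le_max_right _ _)).symm

lemma td_Eop (f : DP n) :
    totalDer (Eop 0 f) = totalDer f - ∑ i : Fin n, X (i, 1) * pmom i 0 0 f := by
  classical
  set M := vbound f with hMdef
  rw [Eop, totalDer_sum]
  have hinner : ∀ i : Fin n,
      totalDer (∑ α ∈ Finset.Icc 1 M, X (i, α) * pmom i α 0 f)
        = (∑ s ∈ Finset.range M, X (i, s + 1) * pderiv (i, s) f)
          - X (i, 1) * pmom i 0 0 f := by
    intro i
    rw [← Finset.Ico_add_one_right_eq_Icc, Finset.sum_Ico_eq_sum_range]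
    simp only [Nat.add_sub_cancel]
    rw [totalDer_sum]
    have hterm : ∀ s : ℕ, totalDer (X (i, 1 + s) * pmom i (1 + s) 0 f)
        = ((X (i, s + 1 + 1) * pmom i (s + 1) 0 f) - (X (i, s + 1) * pmom i s 0 f))
          + X (i, s + 1) * pderiv (i, s) f := by
      intro s
      rw [show 1 + s = s + 1 from Nat.add_comm 1 s]
      rw [totalDer_X_mul (i, s + 1) (pmom i (s + 1) 0 f)]
      rw [td_pmom i s f]
      ring
    rw [Finset.sum_congr rfl fun s _ => hterm s, Finset.sum_add_distrib,
      Finset.sum_range_sub (fun s => X (i, s + 1) * pmom i s 0 f) M]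
    have hMz : X (i, M + 1) * pmom i M 0 f = 0 := by
      rw [pmom_zero_of_le i 0 (le_of_eq hMdef.symm), mul_zero]
    rw [hMz, zero_sub]
    ring
  rw [Finset.sum_congr rfl fun i _ => hinner i, Finset.sum_sub_distrib,
    ← td_double f (le_of_eq hMdef)]

end EnergyAux

/-- `E ∘ ∂ = 0` and `∂ ∘ E = -Σ_i u^{i,1} δ_i`, where `δ_i = p_{i,0,0}` is the
variational derivative. -/
theorem stmt1 {n : ℕ} :
    (∀ f : DP n, Ener (totalDer f) = 0) ∧
    (∀ f : DP n, totalDer (Ener f) = -∑ i : Fin n, X (i, 1) * pmom i 0 0 f) := by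
  constructor
  · intro f
    rw [Ener, EnergyAux.Eop_td, sub_self]
  · intro f
    rw [Ener, EnergyAux.totalDer_sub, EnergyAux.td_Eop]
    ring
end

section
/- The higher Euler operators satisfy the closure identity δ_{i,t} ∘ δ_j = (−1)^t ∂_{j,t} ∘ δ_i on the differential polynomial algebra 𝒜, for all i, j and all t ≥ 0; both sides equal the operator (−1)^t Σ_{p,q≥0} (−1)^p C(p, t−q) ∂^{p+q−t} ∘ ∂_{i,p} ∘ ∂_{j,q}. -/
open MvPolynomial

/-- The explicit operator `(-1)^t Σ_{p,q≥0} (-1)^p C(p, t-q) ∂^{p+q-t} ∂_{i,p} ∂_{j,q}`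
(with the convention `C(p,m) = 0` for `m < 0`, and the sum truncated at a
sufficiently large bound). -/
noncomputable def eulerExpl {n : ℕ} (i j : Fin n) (t : ℕ) (f : DP n) : DP n :=
  ((-1 : ℝ) ^ t) • ∑ p ∈ Finset.range (vbound f), ∑ q ∈ Finset.range (vbound f),
    ((-1 : ℝ) ^ p * (if q ≤ t then (Nat.choose p (t - q) : ℝ) else 0)) •
      totalDer^[p + q - t] (pderiv (i, p) (pderiv (j, q) f))

namespace S3
open Finset
variable {n : ℕ}

lemma pd_comm (v w : Fin n × ℕ) (f : DP n) :
    pderiv v (pderiv w f) = pderiv w (pderiv v f) := by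
  induction f using MvPolynomial.induction_on' with
  | add p q hp hq => simp [hp, hq]
  | monomial s a =>
    rcases eq_or_ne v w with rfl | hvw
    · rfl
    · simp only [pderiv_monomial]
      rw [tsub_right_comm]
      congr 1
      have h1 : (s - Finsupp.single w 1 : (Fin n × ℕ) →₀ ℕ) v = s v := by
        simp [Finsupp.tsub_apply, Finsupp.single_eq_of_ne hvw]
      have h2 : (s - Finsupp.single v 1 : (Fin n × ℕ) →₀ ℕ) w = s w := by
        simp [Finsupp.tsub_apply, Finsupp.single_eq_of_ne (Ne.symm hvw)]
      rw [h1, h2]; ring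

lemma pd_zero_of_big (i : Fin n) {k : ℕ} {f : DP n} (h : vbound f ≤ k) :
    pderiv (i, k) f = 0 := by
  apply pderiv_eq_zero_of_notMem_vars
  intro hmem
  have hk : k ≤ f.vars.sup (fun v => v.2) := Finset.le_sup (f := fun v => v.2) hmem
  simp only [vbound] at h
  omega

lemma vars_pderiv_subset (v : Fin n × ℕ) (f : DP n) :
    (pderiv v f).vars ⊆ f.vars := by
  classical
  intro w hw
  rw [MvPolynomial.mem_vars] at hw ⊢
  obtain ⟨d, hd, hwd⟩ := hw
  conv at hd => rw [f.as_sum, map_sum]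
  simp only [pderiv_monomial] at hd
  have := MvPolynomial.support_sum hd
  rw [Finset.mem_biUnion] at this
  obtain ⟨m, hm, hdm⟩ := this
  have hsub : (MvPolynomial.monomial (m - Finsupp.single v 1)
      ((MvPolynomial.coeff m f) * (m v : ℝ))).support ⊆ {m - Finsupp.single v 1} :=
    MvPolynomial.support_monomial_subset
  have hd' : d = m - Finsupp.single v 1 := by
    have := hsub hdm; simpa using this
  subst hd'
  refine ⟨m, hm, ?_⟩
  rw [Finsupp.mem_support_iff] at hwd ⊢
  intro h0
  apply hwd
  simp [Finsupp.tsub_apply, h0]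

lemma vbound_pderiv_le (v : Fin n × ℕ) (f : DP n) : vbound (pderiv v f) ≤ vbound f := by
  simp only [vbound]
  exact Nat.add_le_add_right (Finset.sup_mono (vars_pderiv_subset v f)) 1


lemma totalDer_eq_sum {f : DP n} {S : Finset (Fin n × ℕ)} (h : f.vars ⊆ S) :
    totalDer f = ∑ v ∈ S, X (v.1, v.2 + 1) * pderiv v f := by
  rw [totalDer]
  refine Finset.sum_subset h fun v _ hv => ?_
  rw [pderiv_eq_zero_of_notMem_vars hv, mul_zero]

lemma totalDer_add (f g : DP n) : totalDer (f + g) = totalDer f + totalDer g := by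
  classical
  rw [totalDer_eq_sum (vars_add_subset f g),
    totalDer_eq_sum (Finset.subset_union_left (s₁ := f.vars) (s₂ := g.vars)),
    totalDer_eq_sum (Finset.subset_union_right (s₁ := f.vars) (s₂ := g.vars)),
    ← Finset.sum_add_distrib]
  refine Finset.sum_congr rfl fun v _ => ?_
  rw [map_add, mul_add]

lemma totalDer_smul (c : ℝ) (f : DP n) : totalDer (c • f) = c • totalDer f := by
  rcases eq_or_ne c 0 with rfl | hc
  · simp [totalDer, MvPolynomial.vars_0]
  · have hv : (c • f).vars ⊆ f.vars := by
      rw [MvPolynomial.smul_eq_C_mul, MvPolynomial.vars_C_mul _ hc]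
    rw [totalDer_eq_sum hv, totalDer, Finset.smul_sum]
    refine Finset.sum_congr rfl fun v _ => ?_
    rw [Derivation.map_smul, mul_smul_comm]

/-- `totalDer` as a linear map. -/
noncomputable def TD : DP n →ₗ[ℝ] DP n where
  toFun := totalDer
  map_add' := totalDer_add
  map_smul' := totalDer_smul

lemma TD_iter (m : ℕ) (f : DP n) : totalDer^[m] f = (TD ^ m) f := by
  induction m generalizing f with
  | zero => rfl
  | succ m ih =>
    rw [Function.iterate_succ_apply, ih, pow_succ, Module.End.mul_apply]
    rfl

lemma vbound_totalDer_le (f : DP n) : vbound (totalDer f) ≤ vbound f + 1 := by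
  classical
  simp only [vbound]
  have : (totalDer f).vars.sup (fun v => v.2) ≤ f.vars.sup (fun v => v.2) + 1 := by
    refine Finset.sup_le fun w hw => ?_
    have h1 := MvPolynomial.vars_sum_subset (t := f.vars)
      (φ := fun v => (X (v.1, v.2 + 1) * pderiv v f : DP n)) hw
    rw [Finset.mem_biUnion] at h1
    obtain ⟨v, hv, hw2⟩ := h1
    have h2 := MvPolynomial.vars_mul (X (v.1, v.2 + 1)) (pderiv v f) hw2
    rw [Finset.mem_union] at h2
    rcases h2 with h2 | h2
    · rw [MvPolynomial.vars_X] at h2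
      rw [Finset.mem_singleton] at h2
      subst h2
      have : v.2 ≤ f.vars.sup (fun v => v.2) := Finset.le_sup (f := fun v => v.2) hv
      omega
    · have h3 := vars_pderiv_subset v f h2
      have : w.2 ≤ f.vars.sup (fun v => v.2) := Finset.le_sup (f := fun v => v.2) h3
      omega
  omega


/-- `pderiv (i, z)` for integer `z`, zero for negative `z`. -/
noncomputable def Ez (i : Fin n) (z : ℤ) : DP n →ₗ[ℝ] DP n :=
  if 0 ≤ z then (pderiv (i, z.toNat)).toLinearMap else 0

lemma Ez_natCast (i : Fin n) (k : ℕ) (f : DP n) : Ez i (k : ℤ) f = pderiv (i, k) f := by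
  simp [Ez]

lemma Ez_neg (i : Fin n) {z : ℤ} (h : z < 0) : Ez i z = 0 := by
  simp [Ez, not_le.mpr h]

lemma Ez_big (i : Fin n) {z : ℤ} {f : DP n} (h : (vbound f : ℤ) ≤ z) : Ez i z f = 0 := by
  have h0 : 0 ≤ z := le_trans (by positivity) h
  rw [Ez, if_pos h0]
  exact pd_zero_of_big i (by omega)

lemma pd_totalDer_succ (i : Fin n) (k : ℕ) (f : DP n) :
    pderiv (i, k + 1) (totalDer f) =
      totalDer (pderiv (i, k + 1) f) + pderiv (i, k) f := by
  classical
  set S : Finset (Fin n × ℕ) := insert (i, k) (f.vars ∪ (pderiv (i, k + 1) f).vars) with hS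
  have h1 : f.vars ⊆ S := fun v hv => by
    simp [hS, Finset.mem_insert, Finset.mem_union, hv]
  have h2 : (pderiv (i, k + 1) f).vars ⊆ S := fun v hv => by
    simp [hS, Finset.mem_insert, Finset.mem_union, hv]
  rw [totalDer_eq_sum h1, map_sum]
  have hterm : ∀ v ∈ S, pderiv (i, k + 1) (X (v.1, v.2 + 1) * pderiv v f) =
      (if v = (i, k) then pderiv v f else 0) +
        X (v.1, v.2 + 1) * pderiv v (pderiv (i, k + 1) f) := by
    intro v _
    rw [pderiv_mul, pd_comm]
    congr 1
    rw [pderiv_X, Pi.single_apply, ite_mul, one_mul, zero_mul]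
    simp only [Prod.mk.injEq, add_left_inj, Prod.ext_iff]
  rw [Finset.sum_congr rfl hterm, Finset.sum_add_distrib,
    Finset.sum_ite_eq' S (i, k) (fun v => pderiv v f),
    if_pos (Finset.mem_insert_self _ _), ← totalDer_eq_sum h2, add_comm]

lemma pd_totalDer_zero (i : Fin n) (f : DP n) :
    pderiv (i, 0) (totalDer f) = totalDer (pderiv (i, 0) f) := by
  classical
  set S : Finset (Fin n × ℕ) := f.vars ∪ (pderiv (i, 0) f).vars with hS
  have h1 : f.vars ⊆ S := Finset.subset_union_left
  have h2 : (pderiv (i, 0) f).vars ⊆ S := Finset.subset_union_right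
  rw [totalDer_eq_sum h1, map_sum]
  have hterm : ∀ v ∈ S, pderiv (i, 0) (X (v.1, v.2 + 1) * pderiv v f) =
      X (v.1, v.2 + 1) * pderiv v (pderiv (i, 0) f) := by
    intro v _
    rw [pderiv_mul, pd_comm]
    have : pderiv (i, 0) (X (v.1, v.2 + 1) : DP n) = 0 := by
      apply pderiv_X_of_ne
      simp only [ne_eq, Prod.mk.injEq, not_and]
      intro _; omega
    rw [this, zero_mul, zero_add]
  rw [Finset.sum_congr rfl hterm, ← totalDer_eq_sum h2]

lemma Ez_totalDer (i : Fin n) (z : ℤ) (f : DP n) :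
    Ez i z (totalDer f) = totalDer (Ez i z f) + Ez i (z - 1) f := by
  rcases lt_trichotomy z 0 with hz | hz | hz
  · rw [Ez_neg i hz, Ez_neg i (by omega : z - 1 < 0)]
    simp [totalDer, MvPolynomial.vars_0]
  · subst hz
    rw [Ez_neg i (by omega : (0:ℤ) - 1 < 0)]
    have h0 : ((0:ℕ) : ℤ) = 0 := rfl
    rw [← h0, Ez_natCast, Ez_natCast, pd_totalDer_zero]
    simp
  · obtain ⟨k, rfl⟩ : ∃ k : ℕ, z = (k : ℤ) + 1 := ⟨(z - 1).toNat, by omega⟩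
    have e1 : ((k : ℤ) + 1) = ((k + 1 : ℕ) : ℤ) := by push_cast; ring
    have e2 : ((k : ℤ) + 1 - 1) = (k : ℤ) := by ring
    rw [e2, e1, Ez_natCast, Ez_natCast, Ez_natCast, pd_totalDer_succ]


lemma TDit_add (l : ℕ) (a b : DP n) :
    totalDer^[l] (a + b) = totalDer^[l] a + totalDer^[l] b := by
  simp [TD_iter, map_add]

lemma TDit_smul (l : ℕ) (c : ℝ) (a : DP n) :
    totalDer^[l] (c • a) = c • totalDer^[l] a := by
  simp [TD_iter, map_smul]

lemma TDit_zero (l : ℕ) : totalDer^[l] (0 : DP n) = 0 := by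
  simp [TD_iter]

lemma pascal_sum {V : Type*} [AddCommMonoid V] [Module ℝ V] (m : ℕ) (F : ℕ → V) :
    ∑ r ∈ Finset.range (m+2), (((m+1).choose r : ℝ)) • F r
      = ∑ r ∈ Finset.range (m+1), ((m.choose r : ℝ)) • F r
        + ∑ r ∈ Finset.range (m+1), ((m.choose r : ℝ)) • F (r+1) := by
  have h1 : ∑ r ∈ Finset.range (m+2), ((m.choose r : ℝ)) • F r
      = ∑ r ∈ Finset.range (m+1), ((m.choose (r+1) : ℝ)) • F (r+1)
        + ((m.choose 0 : ℝ)) • F 0 := Finset.sum_range_succ' _ _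
  have h2 : ∑ r ∈ Finset.range (m+2), ((m.choose r : ℝ)) • F r
      = ∑ r ∈ Finset.range (m+1), ((m.choose r : ℝ)) • F r
        + ((m.choose (m+1) : ℝ)) • F (m+1) := Finset.sum_range_succ _ _
  have hAB : ∑ r ∈ Finset.range (m+1), ((m.choose (r+1) : ℝ)) • F (r+1) + F 0
      = ∑ r ∈ Finset.range (m+1), ((m.choose r : ℝ)) • F r := by
    have := h1.symm.trans h2
    simpa [Nat.choose_succ_self] using this
  have h3 : ∑ r ∈ Finset.range (m+2), (((m+1).choose r : ℝ)) • F r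
      = ∑ r ∈ Finset.range (m+1), (((m+1).choose (r+1) : ℝ)) • F (r+1)
        + (((m+1).choose 0 : ℝ)) • F 0 := Finset.sum_range_succ' _ _
  rw [h3]
  simp only [Nat.choose_succ_succ, Nat.cast_add, add_smul, Finset.sum_add_distrib,
    Nat.choose_zero_right, Nat.cast_one, one_smul]
  rw [← hAB]
  abel

lemma Ez_TD_iter (i : Fin n) (z : ℤ) (m : ℕ) (f : DP n) :
    Ez i z (totalDer^[m] f)
      = ∑ r ∈ Finset.range (m+1), ((m.choose r : ℝ)) • totalDer^[m-r] (Ez i (z - r) f) := by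
  induction m generalizing f with
  | zero => simp
  | succ m ih =>
    rw [Function.iterate_succ_apply, ih (totalDer f)]
    have hterm : ∀ r ∈ Finset.range (m+1),
        (m.choose r : ℝ) • totalDer^[m-r] (Ez i (z - r) (totalDer f))
        = (m.choose r : ℝ) • totalDer^[(m+1)-r] (Ez i (z - r) f)
          + (m.choose r : ℝ) • totalDer^[m-r] (Ez i (z - (r+1 : ℕ)) f) := by
      intro r hr
      rw [Finset.mem_range] at hr
      rw [Ez_totalDer, TDit_add, smul_add]
      congr 2
      · rw [← Function.iterate_succ_apply]
        congr 1
        omega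
      · congr 2
        push_cast
        ring
    rw [Finset.sum_congr rfl hterm, Finset.sum_add_distrib]
    have := pascal_sum m (fun r => totalDer^[(m+1)-r] (Ez i (z - r) f))
    simp only [Nat.succ_sub_succ] at this
    exact this.symm


/-- Truncated higher Euler operator as a linear map. -/
noncomputable def Dl (i : Fin n) (t N : ℕ) : DP n →ₗ[ℝ] DP n :=
  ∑ b ∈ Finset.range N,
    ((-1 : ℝ) ^ b * ((b + t).choose t : ℝ)) • ((TD ^ b) ∘ₗ (Ez i ((t : ℤ) + b)))

lemma Dl_apply (i : Fin n) (t N : ℕ) (f : DP n) :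
    Dl i t N f = ∑ b ∈ Finset.range N,
      ((-1 : ℝ) ^ b * ((b + t).choose t : ℝ)) • totalDer^[b] (Ez i ((t : ℤ) + b) f) := by
  simp [Dl, LinearMap.sum_apply, LinearMap.smul_apply, LinearMap.comp_apply, TD_iter]

lemma pmom_eq_Dl (i : Fin n) (t : ℕ) {N : ℕ} {f : DP n} (h : vbound f ≤ N) :
    pmom i 0 t f = Dl i t N f := by
  have hsub : Finset.range (vbound f) ⊆ Finset.range N := Finset.range_subset_range.mpr h
  rw [pmom]
  simp only [Nat.zero_add]
  rw [Finset.sum_subset hsub (fun b _ hb => by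
    rw [Finset.mem_range, not_lt] at hb
    rw [pd_zero_of_big i (by omega), TDit_zero, smul_zero])]
  rw [Dl_apply]
  refine Finset.sum_congr rfl fun b _ => ?_
  rw [show ((t:ℤ) + b) = ((t + b : ℕ) : ℤ) by push_cast; ring, Ez_natCast]

lemma Dl_totalDer (i : Fin n) (t N : ℕ) {u : DP n} (h : vbound u ≤ N + t) :
    Dl i (t+1) N (totalDer u) = Dl i t N u := by
  rw [Dl_apply, Dl_apply]
  simp only [Nat.cast_add, Nat.cast_one]
  set G : ℕ → DP n := fun b => totalDer^[b] (Ez i ((t : ℤ) + b) u) with hG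
  set e : ℕ → DP n :=
    fun b => ((-1 : ℝ) ^ (b+1) * ((b + t).choose (t+1) : ℝ)) • G b with he
  have hsplit : ∀ b ∈ Finset.range N,
      ((-1 : ℝ) ^ b * ((b + (t+1)).choose (t+1) : ℝ)) •
        totalDer^[b] (Ez i ((t:ℤ) + 1 + b) (totalDer u))
      = ((-1 : ℝ) ^ b * ((b + (t+1)).choose (t+1) : ℝ)) • G (b+1)
        + ((-1 : ℝ) ^ b * ((b + (t+1)).choose (t+1) : ℝ)) • G b := by
    intro b _
    rw [Ez_totalDer, TDit_add, smul_add]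
    congr 2
    · rw [← Function.iterate_succ_apply]
      simp only [hG]
      congr 2
      push_cast; ring
    · simp only [hG]
      congr 2
      push_cast; ring
  rw [Finset.sum_congr rfl hsplit, Finset.sum_add_distrib]
  have h1 : ∑ b ∈ Finset.range (N+1), e b
      = ∑ b ∈ Finset.range N, e (b+1) + e 0 := Finset.sum_range_succ' _ _
  have h2 : ∑ b ∈ Finset.range (N+1), e b
      = ∑ b ∈ Finset.range N, e b + e N := Finset.sum_range_succ _ _
  have he0 : e 0 = 0 := by
    simp [he, Nat.choose_succ_self]
  have heN : e N = 0 := by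
    have hGN : G N = 0 := by
      simp only [hG]
      rw [Ez_big i (by push_cast; omega), TDit_zero]
    simp [he, hGN]
  have hkey : ∑ b ∈ Finset.range N, e (b+1) = ∑ b ∈ Finset.range N, e b := by
    have h3 := h1.symm.trans h2
    rw [he0, heN, add_zero, add_zero] at h3
    exact h3
  have hterm : ∀ b, ((-1 : ℝ) ^ b * ((b + (t+1)).choose (t+1) : ℝ)) • G (b+1)
      = e (b+1) := by
    intro b
    simp only [he]
    congr 1
    rw [show b + 1 + t = b + (t+1) by omega]
    ring
  calc (∑ b ∈ Finset.range N,
        ((-1 : ℝ) ^ b * ((b + (t+1)).choose (t+1) : ℝ)) • G (b+1))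
        + ∑ b ∈ Finset.range N,
        ((-1 : ℝ) ^ b * ((b + (t+1)).choose (t+1) : ℝ)) • G b
      = (∑ b ∈ Finset.range N, e b)
        + ∑ b ∈ Finset.range N,
        ((-1 : ℝ) ^ b * ((b + (t+1)).choose (t+1) : ℝ)) • G b := by
        rw [Finset.sum_congr rfl (fun b _ => hterm b), hkey]
    _ = ∑ b ∈ Finset.range N, ((-1 : ℝ) ^ b * ((b + t).choose t : ℝ)) • G b := by
        rw [← Finset.sum_add_distrib]
        refine Finset.sum_congr rfl fun b _ => ?_
        simp only [he]
        rw [← add_smul]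
        congr 1
        have hP : (b + (t+1)).choose (t+1) = (b + t).choose t + (b + t).choose (t+1) := by
          rw [show b + (t+1) = (b + t) + 1 by omega]
          exact Nat.choose_succ_succ _ _
        rw [hP]
        push_cast
        ring

lemma Dl_totalDer_zero (i : Fin n) (N : ℕ) {u : DP n} (h : vbound u + 1 ≤ N) :
    Dl i 0 N (totalDer u) = 0 := by
  rw [Dl_apply]
  set H : ℕ → DP n := fun b => totalDer^[b] (Ez i ((b : ℤ) - 1) u) with hH
  set e : ℕ → DP n := fun b => ((-1 : ℝ) ^ (b+1)) • H b with he
  have hsplit : ∀ b ∈ Finset.range N,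
      ((-1 : ℝ) ^ b * ((b + 0).choose 0 : ℝ)) •
        totalDer^[b] (Ez i ((0:ℕ) + (b:ℤ)) (totalDer u))
      = e (b+1) + ((-1 : ℝ) ^ b) • H b := by
    intro b _
    have hz : ((0:ℕ) : ℤ) + (b:ℤ) = (b : ℤ) := by push_cast; ring
    rw [hz, Ez_totalDer, TDit_add, smul_add]
    simp only [Nat.choose_zero_right, Nat.cast_one, mul_one]
    congr 1
    · simp only [he, hH]
      rw [← Function.iterate_succ_apply,
        show ((b+1 : ℕ) : ℤ) - 1 = (b : ℤ) by push_cast; ring]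
      congr 1
      ring
  rw [Finset.sum_congr rfl hsplit, Finset.sum_add_distrib]
  have h1 : ∑ b ∈ Finset.range (N+1), e b
      = ∑ b ∈ Finset.range N, e (b+1) + e 0 := Finset.sum_range_succ' _ _
  have h2 : ∑ b ∈ Finset.range (N+1), e b
      = ∑ b ∈ Finset.range N, e b + e N := Finset.sum_range_succ _ _
  have he0 : e 0 = 0 := by
    simp only [he, hH]
    rw [show ((0:ℕ):ℤ) - 1 = (-1 : ℤ) by ring, Ez_neg i (by omega)]
    simp [TDit_zero]
  have heN : e N = 0 := by
    simp only [he, hH]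
    rw [Ez_big i (by push_cast; omega), TDit_zero, smul_zero]
  have hkey : ∑ b ∈ Finset.range N, e (b+1) = ∑ b ∈ Finset.range N, e b := by
    have h3 := h1.symm.trans h2
    rw [he0, heN, add_zero, add_zero] at h3
    exact h3
  rw [hkey, ← Finset.sum_add_distrib]
  refine Finset.sum_eq_zero fun b _ => ?_
  simp only [he]
  rw [← add_smul]
  have : ((-1 : ℝ) ^ (b+1) + (-1) ^ b) = 0 := by ring
  rw [this, zero_smul]


lemma vbound_TDit_le (a : ℕ) (u : DP n) : vbound (totalDer^[a] u) ≤ vbound u + a := by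
  induction a with
  | zero => simp
  | succ a ih =>
    rw [Function.iterate_succ_apply']
    have h1 := vbound_totalDer_le (totalDer^[a] u)
    omega

lemma Dl_iter (i : Fin n) (t N : ℕ) (a : ℕ) {u : DP n} (h : vbound u + a ≤ N) :
    Dl i t N (totalDer^[a] u) = if a ≤ t then Dl i (t - a) N u else 0 := by
  induction a generalizing t u with
  | zero => simp
  | succ a ih =>
    rw [Function.iterate_succ_apply]
    have hvb : vbound (totalDer u) + a ≤ N := by
      have := vbound_totalDer_le u; omega
    rw [ih _ hvb]
    by_cases hat : a ≤ t
    · rw [if_pos hat]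
      by_cases hat' : a + 1 ≤ t
      · rw [if_pos hat']
        rw [show t - a = (t - (a+1)) + 1 by omega]
        exact Dl_totalDer i _ N (by omega)
      · rw [if_neg hat']
        rw [show t - a = 0 by omega]
        exact Dl_totalDer_zero i N (by omega)
    · rw [if_neg hat, if_neg (by omega)]

lemma sum_ext {V : Type*} [AddCommMonoid V] {K L : ℕ} (hKL : K ≤ L) {F : ℕ → V}
    (hz : ∀ b, K ≤ b → F b = 0) :
    ∑ b ∈ Finset.range L, F b = ∑ b ∈ Finset.range K, F b :=
  (Finset.sum_subset (Finset.range_subset_range.mpr hKL) (fun b _ hb =>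
    hz b (by simpa using hb))).symm

lemma inner_A (j : Fin n) (p t M : ℕ) {g : DP n} (hM : vbound g ≤ M) :
    ∑ r ∈ Finset.range (p+1), ((p.choose r : ℝ)) • totalDer^[p-r] (Ez j ((t:ℤ) - r) g)
    = ∑ q ∈ Finset.range M, (if q ≤ t then (p.choose (t - q) : ℝ) else 0) •
        totalDer^[p + q - t] (pderiv (j, q) g) := by
  set A : ℕ → DP n :=
    fun r => ((p.choose r : ℝ)) • totalDer^[p-r] (Ez j ((t:ℤ) - r) g) with hA
  set B : ℕ → DP n :=
    fun q => (if q ≤ t then (p.choose (t - q) : ℝ) else 0) •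
      totalDer^[p + q - t] (pderiv (j, q) g) with hB
  have hAz : ∀ r, p + 1 ≤ r → A r = 0 := by
    intro r hr
    simp only [hA]
    rw [Nat.choose_eq_zero_of_lt (by omega), Nat.cast_zero, zero_smul]
  have hAz' : ∀ r, t + 1 ≤ r → A r = 0 := by
    intro r hr
    simp only [hA]
    rw [Ez_neg j (by omega : (t:ℤ) - r < 0)]
    simp [TDit_zero]
  have hBz : ∀ q, t + 1 ≤ q → B q = 0 := by
    intro q hq
    simp only [hB]
    rw [if_neg (by omega), zero_smul]
  have hBz' : ∀ q, M ≤ q → B q = 0 := by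
    intro q hq
    simp only [hB]
    rw [pd_zero_of_big j (by omega), TDit_zero, smul_zero]
  have hLHS : ∑ r ∈ Finset.range (p+1), A r = ∑ r ∈ Finset.range (t+1), A r := by
    rw [← sum_ext (by omega : p+1 ≤ max p t + 1) hAz,
      sum_ext (by omega : t+1 ≤ max p t + 1) hAz']
  have hRHS : ∑ q ∈ Finset.range M, B q = ∑ q ∈ Finset.range (t+1), B q := by
    rw [← sum_ext (by omega : M ≤ max M (t+1)) hBz',
      sum_ext (by omega : t+1 ≤ max M (t+1)) hBz]
  rw [hLHS, hRHS, ← Finset.sum_range_reflect A (t+1)]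
  refine Finset.sum_congr rfl fun q hq => ?_
  rw [Finset.mem_range] at hq
  simp only [hA, hB]
  rw [if_pos (by omega), show t + 1 - 1 - q = t - q by omega,
    show ((t:ℤ) - ((t - q : ℕ) : ℤ)) = ((q : ℕ) : ℤ) by
      rw [Nat.cast_sub (by omega : q ≤ t)]; ring,
    Ez_natCast, show p - (t - q) = p + q - t by omega]

lemma partA (i j : Fin n) (t : ℕ) (f : DP n) :
    pderiv (j, t) (pmom i 0 0 f)
      = ∑ p ∈ Finset.range (vbound f), ∑ q ∈ Finset.range (vbound f),
          ((-1 : ℝ) ^ p * (if q ≤ t then (p.choose (t - q) : ℝ) else 0)) •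
            totalDer^[p + q - t] (pderiv (i, p) (pderiv (j, q) f)) := by
  have hpm : pmom i 0 0 f
      = ∑ p ∈ Finset.range (vbound f), ((-1 : ℝ) ^ p) • totalDer^[p] (pderiv (i, p) f) := by
    rw [pmom]
    refine Finset.sum_congr rfl fun p _ => ?_
    norm_num
  rw [hpm, ← Ez_natCast j t, map_sum]
  refine Finset.sum_congr rfl fun p hp => ?_
  rw [map_smul, Ez_TD_iter j (t:ℤ) p (pderiv (i, p) f),
    inner_A j p t (vbound f) (vbound_pderiv_le _ f), Finset.smul_sum]
  refine Finset.sum_congr rfl fun q hq => ?_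
  rw [smul_smul, pd_comm]


lemma partB (i j : Fin n) (t : ℕ) (f : DP n) :
    pmom i 0 t (pmom j 0 0 f)
      = ∑ q ∈ Finset.range (vbound f), ∑ p ∈ Finset.range (vbound f),
          ((-1:ℝ)^t * ((-1:ℝ)^p * (if q ≤ t then (p.choose (t-q):ℝ) else 0))) •
            totalDer^[p+q-t] (pderiv (i,p) (pderiv (j,q) f)) := by
  set M := vbound f with hMdef
  set g0 := pmom j 0 0 f with hg0def
  set N := vbound g0 + 2 * M + t + 2 with hNdef
  have h1 : pmom i 0 t g0 = Dl i t N g0 := pmom_eq_Dl i t (by omega)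
  have hg0 : g0 = ∑ q ∈ Finset.range M, ((-1:ℝ)^q) • totalDer^[q] (pderiv (j,q) f) := by
    rw [hg0def, pmom]
    refine Finset.sum_congr rfl fun q _ => ?_
    norm_num
  rw [h1, hg0, map_sum]
  refine Finset.sum_congr rfl fun q hq => ?_
  rw [Finset.mem_range] at hq
  have hvb : vbound (pderiv (j,q) f) + q ≤ N := by
    have := vbound_pderiv_le (j,q) f
    omega
  rw [map_smul, Dl_iter i t N q hvb]
  by_cases hqt : q ≤ t
  · rw [if_pos hqt, Dl_apply]
    set c := t - q with hcdef
    set F : ℕ → DP n := fun p =>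
      ((-1:ℝ)^t * ((-1:ℝ)^p * (p.choose c : ℝ))) •
        totalDer^[p+q-t] (pderiv (i,p) (pderiv (j,q) f)) with hF
    have hRHS : ∑ p ∈ Finset.range M,
        ((-1:ℝ)^t * ((-1:ℝ)^p * (if q ≤ t then (p.choose (t-q):ℝ) else 0))) •
          totalDer^[p+q-t] (pderiv (i,p) (pderiv (j,q) f))
        = ∑ p ∈ Finset.range M, F p := by
      refine Finset.sum_congr rfl fun p _ => ?_
      rw [if_pos hqt]
    rw [hRHS, Finset.smul_sum]
    have hterm : ∀ b ∈ Finset.range N,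
        ((-1:ℝ)^q) • (((-1:ℝ)^b * (((b + c).choose c : ℝ))) •
          totalDer^[b] (Ez i (((c:ℕ):ℤ) + b) (pderiv (j,q) f)))
        = F (c + b) := by
      intro b _
      rw [smul_smul, show (((c:ℕ):ℤ) + (b:ℤ)) = ((c + b : ℕ) : ℤ) by push_cast; ring,
        Ez_natCast]
      simp only [hF]
      rw [show (c + b) + q - t = b by omega]
      congr 1
      rw [show (c + b).choose c = (b + c).choose c by rw [Nat.add_comm]]
      rw [show ((-1:ℝ)^q * ((-1:ℝ)^b * (((b+c).choose c : ℝ))))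
          = ((-1:ℝ)^(q+b)) * (((b+c).choose c : ℝ)) by rw [pow_add]; ring,
        show ((-1:ℝ)^t * ((-1:ℝ)^(c+b) * (((b+c).choose c : ℝ))))
          = ((-1:ℝ)^(t+(c+b))) * (((b+c).choose c : ℝ)) by rw [pow_add]; ring]
      congr 1
      rw [neg_one_pow_eq_pow_mod_two, neg_one_pow_eq_pow_mod_two (n := t+(c+b))]
      congr 1
      omega
    rw [Finset.sum_congr rfl hterm]
    have hshift : ∑ b ∈ Finset.range N, F (c + b)
        = ∑ p ∈ Finset.Ico c (c + N), F p := by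
      rw [Finset.sum_Ico_eq_sum_range, Nat.add_sub_cancel_left]
    rw [hshift]
    have hup : ∑ p ∈ Finset.Ico c (c + N), F p = ∑ p ∈ Finset.range (c + N), F p := by
      refine Finset.sum_subset (fun p hp => ?_) (fun p hp hnp => ?_)
      · rw [Finset.mem_Ico] at hp
        rw [Finset.mem_range]
        omega
      · rw [Finset.mem_range] at hp
        rw [Finset.mem_Ico, not_and_or] at hnp
        have hpc : p < c := by omega
        simp only [hF]
        rw [Nat.choose_eq_zero_of_lt hpc, Nat.cast_zero, mul_zero, mul_zero, zero_smul]
    rw [hup]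
    refine sum_ext (by omega : M ≤ c + N) fun p hp => ?_
    simp only [hF]
    rw [pd_comm, pd_zero_of_big i (by omega), map_zero, TDit_zero, smul_zero]
  · rw [if_neg hqt, smul_zero]
    symm
    refine Finset.sum_eq_zero fun p _ => ?_
    rw [if_neg hqt, mul_zero, mul_zero, zero_smul]

end S3

/-- Closure identity for the higher Euler operators: `δ_{i,t} ∘ δ_j = (-1)^t ∂_{j,t} ∘ δ_i`,
both sides being equal to the explicit operator
`(-1)^t Σ_{p,q≥0} (-1)^p C(p,t-q) ∂^{p+q-t} ∂_{i,p} ∂_{j,q}`.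
Here `δ_{i,t} = p_{i,0,t}` and `δ_j = p_{j,0,0}`. -/
theorem stmt3 {n : ℕ} (i j : Fin n) (t : ℕ) (f : DP n) :
    pmom i 0 t (pmom j 0 0 f) = ((-1 : ℝ) ^ t) • pderiv (j, t) (pmom i 0 0 f) ∧
    pmom i 0 t (pmom j 0 0 f) = eulerExpl i j t f := by
  have hB := S3.partB i j t f
  have hA := S3.partA i j t f
  have hE : ((-1:ℝ)^t) • (∑ p ∈ Finset.range (vbound f), ∑ q ∈ Finset.range (vbound f),
        ((-1 : ℝ) ^ p * (if q ≤ t then (Nat.choose p (t - q) : ℝ) else 0)) •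
          totalDer^[p + q - t] (pderiv (i, p) (pderiv (j, q) f)))
      = ∑ q ∈ Finset.range (vbound f), ∑ p ∈ Finset.range (vbound f),
          ((-1:ℝ)^t * ((-1:ℝ)^p * (if q ≤ t then (p.choose (t-q):ℝ) else 0))) •
            totalDer^[p+q-t] (pderiv (i,p) (pderiv (j,q) f)) := by
    rw [Finset.sum_comm, Finset.smul_sum]
    refine Finset.sum_congr rfl fun q _ => ?_
    rw [Finset.smul_sum]
    refine Finset.sum_congr rfl fun p _ => ?_
    rw [smul_smul]
  constructor
  · rw [hB, ← hE, hA]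
  · rw [hB, ← hE]
    rfl
end

section
/- If f ∈ 𝒜 is a differential polynomial such that f·g ∈ ∂𝒜 for every g ∈ 𝒜, then f = 0. -/
open MvPolynomial

/-- Partial derivatives commute. -/
lemma pderiv_comm' {σ : Type*} [DecidableEq σ] (i j : σ) (f : MvPolynomial σ ℝ) :
    pderiv i (pderiv j f) = pderiv j (pderiv i f) := by
  induction f using MvPolynomial.induction_on' with
  | add p q hp hq => simp [hp, hq]
  | monomial s a =>
    simp only [pderiv_monomial]
    rcases eq_or_ne i j with rfl | hij
    · rfl
    · congr 1
      · rw [tsub_tsub, tsub_tsub, add_comm]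
      · rw [Finsupp.tsub_apply, Finsupp.tsub_apply, Finsupp.single_apply,
          Finsupp.single_apply, if_neg hij, if_neg (Ne.symm hij)]
        simp only [Nat.sub_zero]
        ring

/-- Over `ℝ` (characteristic zero), the partial derivative with respect to an
occurring variable is nonzero. -/
lemma pderiv_ne_zero_of_mem_vars {σ : Type*} [DecidableEq σ] {i : σ} {f : MvPolynomial σ ℝ}
    (h : i ∈ f.vars) : pderiv i f ≠ 0 := by
  rw [mem_vars] at h
  obtain ⟨d, hd, hdi⟩ := h
  have hdi' : d i ≠ 0 := Finsupp.mem_support_iff.mp hdi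
  have key : coeff (d - Finsupp.single i 1) (pderiv i f) = (d i : ℝ) * coeff d f := by
    conv_lhs => rw [f.as_sum]
    rw [map_sum, Finset.sum_congr rfl (fun d' _ => pderiv_monomial), coeff_sum,
      Finset.sum_eq_single d]
    · rw [coeff_monomial, if_pos rfl]; ring
    · intro d' hd' hne
      rw [coeff_monomial]
      split_ifs with he
      · rcases Nat.eq_zero_or_pos (d' i) with h0 | h0
        · simp [h0]
        · exfalso; apply hne
          ext a
          rcases eq_or_ne a i with rfl | ha
          · have h1 := congrArg (fun g => g a) he
            simp only [Finsupp.tsub_apply, Finsupp.single_apply, eq_self_iff_true,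
              if_true] at h1
            omega
          · have h1 := congrArg (fun g => g a) he
            simp only [Finsupp.tsub_apply, Finsupp.single_apply,
              if_neg (Ne.symm ha)] at h1
            omega
      · rfl
    · intro hd''; exact absurd hd hd''
  intro h0
  rw [h0, coeff_zero] at key
  rcases mul_eq_zero.mp key.symm with h1 | h2
  · exact hdi' (Nat.cast_eq_zero.mp h1)
  · exact (mem_support_iff.mp hd) h2

/-- The sum defining `totalDer` may be extended over any superset of the variables. -/
lemma totalDer_eq_sum_subset {n : ℕ} (k : DP n) (S : Finset (Fin n × ℕ)) (hS : k.vars ⊆ S) :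
    totalDer k = ∑ v ∈ S, X (v.1, v.2 + 1) * pderiv v k :=
  Finset.sum_subset hS (fun _ _ hx => by
    rw [pderiv_eq_zero_of_notMem_vars hx, mul_zero])

/-- Commutation relation `∂_{i,s+1} ∘ ∂ = ∂ ∘ ∂_{i,s+1} + ∂_{i,s}`. -/
lemma totalDer_comm {n : ℕ} (k : DP n) (i : Fin n) (s : ℕ) :
    pderiv ((i, s + 1) : Fin n × ℕ) (totalDer k) =
      totalDer (pderiv ((i, s + 1) : Fin n × ℕ) k) + pderiv ((i, s) : Fin n × ℕ) k := by
  classical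
  set S : Finset (Fin n × ℕ) :=
    insert (i, s) (k.vars ∪ (pderiv ((i, s + 1) : Fin n × ℕ) k).vars) with hSdef
  have hkS : k.vars ⊆ S := fun x hx => by simp [hSdef, hx]
  have hpS : (pderiv ((i, s + 1) : Fin n × ℕ) k).vars ⊆ S := fun x hx => by simp [hSdef, hx]
  rw [totalDer_eq_sum_subset k S hkS, map_sum]
  have hterm : ∀ v ∈ S,
      pderiv ((i, s + 1) : Fin n × ℕ) (X (v.1, v.2 + 1) * pderiv v k) =
        (if v = (i, s) then pderiv v k else 0)
          + X (v.1, v.2 + 1) * pderiv v (pderiv ((i, s + 1) : Fin n × ℕ) k) := by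
    intro v _
    rw [pderiv_mul, pderiv_comm' ((i, s + 1) : Fin n × ℕ) v k]
    congr 1
    split_ifs with hv
    · subst hv; rw [pderiv_X_self, one_mul]
    · rw [pderiv_X_of_ne, zero_mul]
      intro hc
      apply hv
      have h1 : v.1 = i := congrArg Prod.fst hc
      have h2 : v.2 + 1 = s + 1 := congrArg Prod.snd hc
      exact Prod.ext h1 (by omega)
  rw [Finset.sum_congr rfl hterm, Finset.sum_add_distrib,
    Finset.sum_ite_eq' S ((i, s) : Fin n × ℕ) (fun v => pderiv v k),
    if_pos (Finset.mem_insert_self _ _),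
    ← totalDer_eq_sum_subset _ S hpS, add_comm]

/-- If `f·g ∈ ∂𝒜` for every differential polynomial `g`, then `f = 0`. -/
theorem stmt7 {n : ℕ} (f : DP n)
    (h : ∀ g : DP n, ∃ k : DP n, f * g = totalDer k) : f = 0 := by
  classical
  rcases Nat.eq_zero_or_pos n with hn | hn
  · subst hn
    obtain ⟨k, hk⟩ := h 1
    have hke : k.vars = ∅ := Finset.eq_empty_of_isEmpty _
    rw [mul_one] at hk
    rw [hk, totalDer, hke, Finset.sum_empty]
  · set j : Fin n := ⟨0, hn⟩ with hj
    set s0 : ℕ := f.vars.sup (fun v => v.2) with hs0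
    set N : ℕ := vbound f with hN
    have hNdef : N = s0 + 1 := rfl
    obtain ⟨k, hk⟩ := h (X ((j, N) : Fin n × ℕ) ^ 2)
    rcases Finset.eq_empty_or_nonempty k.vars with hkv | hkv
    · have h0 : totalDer k = 0 := by rw [totalDer, hkv, Finset.sum_empty]
      rw [h0] at hk
      rcases mul_eq_zero.mp hk with h1 | h2
      · exact h1
      · exact absurd h2 (pow_ne_zero _ (X_ne_zero _))
    · set M : ℕ := k.vars.sup (fun v => v.2) with hM
      obtain ⟨v0, hv0, hv0M⟩ := Finset.exists_mem_eq_sup k.vars hkv (fun v => v.2)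
      have hkvars : ∀ v ∈ k.vars, v.2 ≤ M := fun v hv => Finset.le_sup (f := fun v => v.2) hv
      have hfvars : ∀ v ∈ f.vars, v.2 ≤ s0 := fun v hv => Finset.le_sup (f := fun v => v.2) hv
      have hvarsfg : ∀ v ∈ (f * X ((j, N) : Fin n × ℕ) ^ 2).vars, v.2 ≤ N := by
        intro v hv
        rcases Finset.mem_union.mp (vars_mul _ _ hv) with h1 | h1
        · have := hfvars _ h1; omega
        · have h2 : v ∈ (X ((j, N) : Fin n × ℕ) : DP n).vars := vars_pow _ _ h1
          rw [vars_X] at h2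
          have : v = (j, N) := Finset.mem_singleton.mp h2
          rw [this]
      have hMlt : M < N := by
        have hcomm := totalDer_comm k v0.1 M
        have hz : pderiv ((v0.1, M + 1) : Fin n × ℕ) k = 0 :=
          pderiv_eq_zero_of_notMem_vars (fun hc => by have := hkvars _ hc; simp at this)
        have hz2 : totalDer (0 : DP n) = 0 := by simp [totalDer]
        have hne : pderiv ((v0.1, M) : Fin n × ℕ) k ≠ 0 := by
          have hv0eq : ((v0.1, M) : Fin n × ℕ) = v0 := Prod.ext rfl hv0M
          rw [hv0eq]
          exact pderiv_ne_zero_of_mem_vars hv0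
        have hnz : pderiv ((v0.1, M + 1) : Fin n × ℕ) (f * X ((j, N) : Fin n × ℕ) ^ 2) ≠ 0 := by
          rw [hk, hcomm, hz, hz2, zero_add]
          exact hne
        have hmem : ((v0.1, M + 1) : Fin n × ℕ) ∈ (f * X ((j, N) : Fin n × ℕ) ^ 2).vars := by
          by_contra hc; exact hnz (pderiv_eq_zero_of_notMem_vars hc)
        have := hvarsfg _ hmem
        simp only at this
        omega
      have hknoN : ∀ a : Fin n, pderiv ((a, N) : Fin n × ℕ) k = 0 := fun a =>
        pderiv_eq_zero_of_notMem_vars (fun hc => by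
          have := hkvars _ hc; simp only at this; omega)
      have hcalc : pderiv ((j, N) : Fin n × ℕ)
          (pderiv ((j, N) : Fin n × ℕ) (totalDer k)) = 0 := by
        have e1 : pderiv ((j, N) : Fin n × ℕ) (totalDer k) = pderiv ((j, s0) : Fin n × ℕ) k := by
          rw [hNdef, totalDer_comm k j s0, ← hNdef, hknoN j]
          simp [totalDer]
        rw [e1, pderiv_comm' ((j, N) : Fin n × ℕ) ((j, s0) : Fin n × ℕ) k, hknoN j, map_zero]
      have hf0 : pderiv ((j, N) : Fin n × ℕ) f = 0 :=
        pderiv_eq_zero_of_notMem_vars (fun hc => by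
          have := hfvars _ hc; simp only at this; omega)
      have hdirect : pderiv ((j, N) : Fin n × ℕ)
          (pderiv ((j, N) : Fin n × ℕ) (f * X ((j, N) : Fin n × ℕ) ^ 2)) = 2 * f := by
        have hp2 : pderiv ((j, N) : Fin n × ℕ) (((2 : ℕ) : DP n)) = 0 := by
          rw [← map_natCast (C : ℝ →+* DP n) 2, pderiv_C]
        simp only [hp2, pderiv_mul, pderiv_pow, pderiv_X_self, hf0, map_mul, map_pow,
          map_ofNat, map_natCast, zero_mul, zero_add, mul_one, pow_one, map_one]
        ring
      rw [hk, hcalc] at hdirect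
      have h2 : (2 : DP n) ≠ 0 := by
        intro he
        have := congrArg constantCoeff he
        simp only [map_ofNat, map_zero] at this
        norm_num at this
      rcases mul_eq_zero.mp hdirect.symm with h1 | h1
      · exact absurd h1 h2
      · exact h1
end

section
/- Let D be a first order differential operator on 𝒜 satisfying D ∘ ∂ = ∂ ∘ (D − D(1)·id). Then for every f ∈ 𝒜, D(f) − (X^i δ_i(f) − a·E(f)) ∈ ∂𝒜, where a = D(1) and X^i = (D − a·id)(u^i). Explicitly, D has the form D = a + Σ_{i,s} X^{i,s} ∂_{i,s} with X^{i,s} = ∂^s(X^i) − Σ_{t=1}^{s} ∂^{s−t}(a·u^{i,t}). -/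
open MvPolynomial

/-- The first order differential operator `D = a·id + Σ_{i,s} X^{i,s} ∂_{i,s}`
determined by the data `a ∈ 𝒜`, `X^{i,s} ∈ 𝒜` (the sum is finite on each
differential polynomial). -/
noncomputable def Dop {n : ℕ} (a : DP n) (Xc : Fin n → ℕ → DP n) (f : DP n) : DP n :=
  a * f + ∑ᶠ v : Fin n × ℕ, Xc v.1 v.2 * pderiv v f

namespace Stmt8Aux

variable {n : ℕ}

lemma vars_pderiv (w : Fin n × ℕ) (f : DP n) : (pderiv w f).vars ⊆ f.vars := by
  classical
  conv_lhs => rw [f.as_sum]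
  rw [map_sum]
  refine (vars_sum_subset _ _).trans ?_
  intro v hv
  rw [Finset.mem_biUnion] at hv
  obtain ⟨m, hm, hv⟩ := hv
  rw [pderiv_monomial] at hv
  rcases eq_or_ne (coeff m f * m w) 0 with h0 | h0
  · simp [h0] at hv
  · rw [vars_monomial h0] at hv
    have hsub : (m - Finsupp.single w 1).support ⊆ m.support := by
      intro x hx
      rw [Finsupp.mem_support_iff] at hx ⊢
      intro hc
      simp [Finsupp.tsub_apply, hc] at hx
    rw [mem_vars]
    exact ⟨m, hm, hsub hv⟩

lemma totalDer_eq_sum {f : DP n} {S : Finset (Fin n × ℕ)} (hS : f.vars ⊆ S) :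
    totalDer f = ∑ v ∈ S, X (v.1, v.2 + 1) * pderiv v f := by
  rw [totalDer]
  exact Finset.sum_subset hS (fun v _ hv => by
    rw [pderiv_eq_zero_of_notMem_vars hv, mul_zero])

lemma totalDer_add (f g : DP n) : totalDer (f + g) = totalDer f + totalDer g := by
  classical
  rw [totalDer_eq_sum (S := f.vars ∪ g.vars) (vars_add_subset f g),
      totalDer_eq_sum (S := f.vars ∪ g.vars) Finset.subset_union_left,
      totalDer_eq_sum (S := f.vars ∪ g.vars) Finset.subset_union_right,
      ← Finset.sum_add_distrib]
  simp [mul_add]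

lemma totalDer_zero : totalDer (0 : DP n) = 0 := by
  simp [totalDer, vars_0]

lemma totalDer_smul (c : ℝ) (f : DP n) : totalDer (c • f) = c • totalDer f := by
  classical
  rcases eq_or_ne c 0 with rfl | hc
  · simp [totalDer_zero]
  · have hv : (c • f).vars ⊆ f.vars := by
      rw [MvPolynomial.smul_eq_C_mul, vars_C_mul _ (by simpa using hc)]
    rw [totalDer_eq_sum hv, totalDer, Finset.smul_sum]
    refine Finset.sum_congr rfl (fun v _ => ?_)
    rw [Derivation.map_smul, mul_smul_comm]

lemma totalDer_sub (f g : DP n) : totalDer (f - g) = totalDer f - totalDer g := by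
  have h : totalDer (-g) = - totalDer g := by
    have := totalDer_smul (-1 : ℝ) g
    simpa using this
  rw [sub_eq_add_neg, totalDer_add, h, sub_eq_add_neg]

lemma totalDer_sum {ι : Type*} (s : Finset ι) (φ : ι → DP n) :
    totalDer (∑ i ∈ s, φ i) = ∑ i ∈ s, totalDer (φ i) := by
  classical
  induction s using Finset.induction_on with
  | empty => simp [totalDer_zero]
  | insert _ _ h ih => rw [Finset.sum_insert h, Finset.sum_insert h, totalDer_add, ih]

lemma totalDer_mul (f g : DP n) : totalDer (f * g) = totalDer f * g + f * totalDer g := by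
  classical
  rw [totalDer_eq_sum (S := f.vars ∪ g.vars) (vars_mul f g),
      totalDer_eq_sum (S := f.vars ∪ g.vars) (f := f) Finset.subset_union_left,
      totalDer_eq_sum (S := f.vars ∪ g.vars) (f := g) Finset.subset_union_right,
      Finset.sum_mul, Finset.mul_sum, ← Finset.sum_add_distrib]
  congr 1; ext v
  rw [pderiv_mul]
  ring_nf

lemma totalDer_X (v : Fin n × ℕ) : totalDer (X v : DP n) = X (v.1, v.2 + 1) := by
  rw [totalDer, vars_X, Finset.sum_singleton, pderiv_X_self, mul_one]

lemma pderiv_comm (a b : Fin n × ℕ) (f : DP n) :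
    pderiv a (pderiv b f) = pderiv b (pderiv a f) := by
  classical
  induction f using MvPolynomial.induction_on' with
  | add p q hp hq => simp [map_add, hp, hq]
  | monomial m c =>
    rcases eq_or_ne a b with rfl | hab
    · rfl
    · simp only [pderiv_monomial]
      have h1 : ((m - Finsupp.single b 1 : (Fin n × ℕ) →₀ ℕ)) a = m a := by
        rw [Finsupp.tsub_apply, Finsupp.single_eq_of_ne hab]; rfl
      have h2 : ((m - Finsupp.single a 1 : (Fin n × ℕ) →₀ ℕ)) b = m b := by
        rw [Finsupp.tsub_apply, Finsupp.single_eq_of_ne (Ne.symm hab)]; rfl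
      rw [h1, h2, tsub_right_comm]
      ring_nf

lemma pderiv_vbound (f : DP n) (i : Fin n) (k : ℕ) (hk : vbound f ≤ k) :
    pderiv (i, k) f = 0 := by
  apply pderiv_eq_zero_of_notMem_vars
  intro h
  have h2 : k ≤ f.vars.sup (fun v => v.2) := by
    simpa using Finset.le_sup (f := fun v : Fin n × ℕ => v.2) h
  simp only [vbound] at hk
  omega

lemma pderiv_totalDer_zero (i : Fin n) (f : DP n) :
    pderiv (i, 0) (totalDer f) = totalDer (pderiv (i, 0) f) := by
  rw [totalDer, map_sum, totalDer_eq_sum (vars_pderiv (i, 0) f)]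
  refine Finset.sum_congr rfl (fun v _ => ?_)
  rw [pderiv_mul, pderiv_X_of_ne (by simp), zero_mul, zero_add, pderiv_comm]

lemma pderiv_totalDer_succ (i : Fin n) (s : ℕ) (f : DP n) :
    pderiv (i, s + 1) (totalDer f) =
      totalDer (pderiv (i, s + 1) f) + pderiv (i, s) f := by
  classical
  rw [totalDer, map_sum, totalDer_eq_sum (vars_pderiv (i, s + 1) f)]
  have key : ∀ v ∈ f.vars,
      pderiv (i, s + 1) (X (v.1, v.2 + 1) * pderiv v f) =
        X (v.1, v.2 + 1) * pderiv v (pderiv (i, s + 1) f)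
          + (if v = (i, s) then pderiv (i, s) f else 0) := by
    intro v _
    rw [pderiv_mul, pderiv_comm]
    rcases eq_or_ne v (i, s) with rfl | hv
    · simp [pderiv_X_self]; ring
    · rw [pderiv_X_of_ne, if_neg hv, zero_mul, zero_add, add_zero]
      intro h
      apply hv
      have h1 : v.1 = i := congrArg Prod.fst h
      have h2 : v.2 = s := by have := congrArg Prod.snd h; simpa using this
      exact Prod.ext h1 h2
  rw [Finset.sum_congr rfl key, Finset.sum_add_distrib]
  congr 1
  rw [Finset.sum_ite_eq' f.vars (i, s) (fun _ => pderiv (i, s) f)]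
  split
  · rfl
  · next h => rw [pderiv_eq_zero_of_notMem_vars h]

/-- The submodule `∂𝒜` of total derivatives. -/
noncomputable def ImD (n : ℕ) : Submodule ℝ (DP n) where
  carrier := Set.range totalDer
  add_mem' := by
    rintro _ _ ⟨f, rfl⟩ ⟨g, rfl⟩
    exact ⟨f + g, totalDer_add f g⟩
  zero_mem' := ⟨0, totalDer_zero⟩
  smul_mem' := by
    rintro c _ ⟨f, rfl⟩
    exact ⟨c • f, totalDer_smul c f⟩

lemma totalDer_mem_ImD (f : DP n) : totalDer f ∈ ImD n := ⟨f, rfl⟩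

/-- Integration by parts. -/
lemma ibp (t : ℕ) (g h : DP n) :
    g * totalDer^[t] h - ((-1 : ℝ) ^ t) • (totalDer^[t] g * h) ∈ ImD n := by
  induction t generalizing g with
  | zero => simp
  | succ t ih =>
    have key : g * totalDer^[t + 1] h - ((-1 : ℝ) ^ (t + 1)) • (totalDer^[t + 1] g * h)
        = totalDer (g * totalDer^[t] h)
          - (totalDer g * totalDer^[t] h
              - ((-1 : ℝ) ^ t) • (totalDer^[t] (totalDer g) * h)) := by
      rw [Function.iterate_succ_apply' totalDer t h, Function.iterate_succ_apply totalDer t g,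
        totalDer_mul]
      simp only [smul_eq_C_mul, pow_succ, map_mul, map_neg, map_one]
      ring
    rw [key]
    exact sub_mem (totalDer_mem_ImD _) (ih (totalDer g))

lemma ibp' (t : ℕ) (g h : DP n) :
    ((-1 : ℝ) ^ t) • (g * totalDer^[t] h) - totalDer^[t] g * h ∈ ImD n := by
  have h1 := (ImD n).smul_mem ((-1 : ℝ) ^ t) (ibp t g h)
  rw [smul_sub, smul_smul, ← pow_add] at h1
  have h2 : (-1 : ℝ) ^ (t + t) = 1 := Even.neg_one_pow ⟨t, rfl⟩
  rwa [h2, one_smul] at h1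

end Stmt8Aux

open Stmt8Aux

/-- If a first order differential operator `D` satisfies `D∘∂ = ∂∘(D - D(1)·id)`,
then `D(f) ≡ Σ_i X^i δ_i(f) - a E(f) mod ∂𝒜` where `a = D(1)`, `X^i = (D - a·id)(u^i) = X^{i,0}`,
and explicitly `X^{i,s} = ∂^s(X^i) - Σ_{t=1}^s ∂^{s-t}(a·u^{i,t})`. -/
theorem stmt8 {n : ℕ} (a : DP n) (Xc : Fin n → ℕ → DP n)
    (hD : ∀ f : DP n, Dop a Xc (totalDer f) = totalDer (Dop a Xc f - a * f)) :
    (∀ f : DP n, ∃ g : DP n,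
      Dop a Xc f - ((∑ i : Fin n, Xc i 0 * pmom i 0 0 f) - a * Ener f) = totalDer g) ∧
    (∀ (i : Fin n) (s : ℕ),
      Xc i s = totalDer^[s] (Xc i 0)
        - ∑ t ∈ Finset.Icc 1 s, totalDer^[s - t] (a * X (i, t))) := by
  classical
  -- Evaluation of Dop on the variables
  have hDopX : ∀ w : Fin n × ℕ, Dop a Xc (X w) = a * X w + Xc w.1 w.2 := by
    intro w
    rw [Dop]
    congr 1
    rw [finsum_eq_single _ w (by
      intro v hv
      rw [pderiv_X_of_ne (Ne.symm hv), mul_zero])]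
    rw [pderiv_X_self, mul_one]
  -- The recursion for the coefficients
  have hrec : ∀ (i : Fin n) (s : ℕ),
      Xc i (s + 1) = totalDer (Xc i s) - a * X (i, s + 1) := by
    intro i s
    have h := hD (X (i, s))
    rw [totalDer_X] at h
    simp only at h
    rw [hDopX ((i, s + 1)), hDopX ((i, s))] at h
    simp only [add_sub_cancel_left] at h
    have := h.symm
    rw [this]
    ring
  -- Part 2
  have part2 : ∀ (i : Fin n) (s : ℕ),
      Xc i s = totalDer^[s] (Xc i 0)
        - ∑ t ∈ Finset.Icc 1 s, totalDer^[s - t] (a * X (i, t)) := by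
    intro i s
    induction s with
    | zero => simp
    | succ s ih =>
      rw [hrec i s, ih, totalDer_sub, totalDer_sum,
        Finset.sum_Icc_succ_top (by omega : 1 ≤ s + 1)]
      rw [← Function.iterate_succ_apply' totalDer s (Xc i 0)]
      have hterm : ∀ t ∈ Finset.Icc 1 s,
          totalDer (totalDer^[s - t] (a * X (i, t)))
            = totalDer^[s + 1 - t] (a * X (i, t)) := by
        intro t ht
        rw [Finset.mem_Icc] at ht
        rw [← Function.iterate_succ_apply' totalDer (s - t) (a * X (i, t))]
        congr 1
        omega
      rw [Finset.sum_congr rfl hterm]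
      have : s + 1 - (s + 1) = 0 := by omega
      rw [this, Function.iterate_zero_apply]
      ring
  refine ⟨?_, part2⟩
  -- Part 1
  intro f
  set N := vbound f with hN
  -- expand Dop
  have hDop : Dop a Xc f
      = a * f + ∑ i : Fin n, ∑ s ∈ Finset.range N, Xc i s * pderiv (i, s) f := by
    rw [Dop]
    congr 1
    rw [finsum_eq_sum_of_support_subset
        (s := (Finset.univ ×ˢ Finset.range N : Finset (Fin n × ℕ)))]
    · rw [Finset.sum_product]
    · intro v hv
      simp only [Function.mem_support] at hv
      simp only [Finset.coe_product, Set.mem_prod, Finset.mem_coe, Finset.mem_univ,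
        Finset.mem_range, true_and]
      by_contra hc
      exact hv (by
        rw [pderiv_vbound f v.1 v.2 (by omega), mul_zero])
  suffices hsuff : Dop a Xc f - ((∑ i : Fin n, Xc i 0 * pmom i 0 0 f) - a * Ener f) ∈ ImD n by
    obtain ⟨g, hg⟩ := hsuff
    exact ⟨g, hg.symm⟩
  -- rewrite the target as a sum over i
  have hexp : Dop a Xc f - ((∑ i : Fin n, Xc i 0 * pmom i 0 0 f) - a * Ener f)
      = ∑ i : Fin n,
          ((∑ s ∈ Finset.range N, Xc i s * pderiv (i, s) f)
            - Xc i 0 * pmom i 0 0 f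
            + ∑ α ∈ Finset.Icc 1 N, a * (X (i, α) * pmom i α 0 f)) := by
    rw [hDop, Ener, Eop, mul_sub, Finset.mul_sum, Finset.sum_add_distrib,
      Finset.sum_sub_distrib]
    simp only [Finset.mul_sum]
    ring
  rw [hexp]
  refine Submodule.sum_mem _ (fun i _ => ?_)
  set A := ∑ s ∈ Finset.range N, Xc i s * pderiv (i, s) f with hA'
  set B := Xc i 0 * pmom i 0 0 f with hBdef
  set Cc := ∑ α ∈ Finset.Icc 1 N, a * (X (i, α) * pmom i α 0 f) with hCdef
  set B' := ∑ t ∈ Finset.range N, totalDer^[t] (Xc i 0) * pderiv (i, t) f with hB'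
  set C' := ∑ α ∈ Finset.Icc 1 N, ∑ t ∈ Finset.range N,
      totalDer^[t] (a * X (i, α)) * pderiv (i, α + t) f with hC'
  -- Step 1 : B' - B ∈ ∂𝒜
  have h1 : B' - B ∈ ImD n := by
    have hpm : B = ∑ t ∈ Finset.range N,
        ((-1 : ℝ) ^ t) • (Xc i 0 * totalDer^[t] (pderiv (i, t) f)) := by
      rw [hBdef, pmom, Finset.mul_sum]
      refine Finset.sum_congr rfl (fun t _ => ?_)
      simp [mul_smul_comm]
    rw [hpm, hB', ← Finset.sum_sub_distrib]
    refine Submodule.sum_mem _ (fun t _ => ?_)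
    have := (ImD n).neg_mem (ibp' t (Xc i 0) (pderiv (i, t) f))
    rwa [neg_sub] at this
  -- Step 2 : Cc - C' ∈ ∂𝒜
  have h2 : Cc - C' ∈ ImD n := by
    rw [hCdef, hC', ← Finset.sum_sub_distrib]
    refine Submodule.sum_mem _ (fun α _ => ?_)
    have hpm : a * (X (i, α) * pmom i α 0 f) = ∑ t ∈ Finset.range N,
        ((-1 : ℝ) ^ t) • ((a * X (i, α)) * totalDer^[t] (pderiv (i, α + t) f)) := by
      rw [pmom, Finset.mul_sum, Finset.mul_sum]
      refine Finset.sum_congr rfl (fun t _ => ?_)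
      simp only [Nat.add_zero, Nat.choose_zero_right, Nat.cast_one, mul_one, add_zero]
      rw [mul_smul_comm, mul_smul_comm, mul_assoc]
    rw [hpm, ← Finset.sum_sub_distrib]
    exact Submodule.sum_mem _ (fun t _ => ibp' t (a * X (i, α)) (pderiv (i, α + t) f))
  -- Step 3 : A + C' = B'
  have h3 : A + C' = B' := by
    have hA2 : A = B' - ∑ s ∈ Finset.range N, ∑ t ∈ Finset.Icc 1 s,
        totalDer^[s - t] (a * X (i, t)) * pderiv (i, s) f := by
      rw [hA', hB', ← Finset.sum_sub_distrib]
      refine Finset.sum_congr rfl (fun s _ => ?_)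
      rw [part2 i s, sub_mul, Finset.sum_mul]
    have hkey : C' = ∑ s ∈ Finset.range N, ∑ t ∈ Finset.Icc 1 s,
        totalDer^[s - t] (a * X (i, t)) * pderiv (i, s) f := by
      rw [hC']; rw [Finset.sum_sigma', Finset.sum_sigma']
      rw [← Finset.sum_filter_add_sum_filter_not _ (fun p : Σ _ : ℕ, ℕ => p.1 + p.2 < N)]
      have hz : ∑ p ∈ ((Finset.Icc 1 N).sigma fun _ => Finset.range N).filter
          (fun p : Σ _ : ℕ, ℕ => ¬ p.1 + p.2 < N),
          totalDer^[p.2] (a * X (i, p.1)) * pderiv (i, p.1 + p.2) f = 0 := by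
        refine Finset.sum_eq_zero (fun p hp => ?_)
        rw [Finset.mem_filter] at hp
        rw [pderiv_vbound f i (p.1 + p.2) (by omega), mul_zero]
      rw [hz, add_zero]
      refine Finset.sum_nbij' (fun p => ⟨p.1 + p.2, p.1⟩) (fun p => ⟨p.2, p.1 - p.2⟩)
        ?_ ?_ ?_ ?_ ?_ <;> rintro ⟨x, y⟩ hp <;>
        simp only [Finset.mem_filter, Finset.mem_sigma, Finset.mem_Icc,
          Finset.mem_range] at hp
      · simp only [Finset.mem_sigma, Finset.mem_Icc, Finset.mem_range]
        omega
      · simp only [Finset.mem_filter, Finset.mem_sigma, Finset.mem_Icc, Finset.mem_range]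
        omega
      · have h : x + y - x = y := by omega
        simp only [h]
      · have h : y + (x - y) = x := by omega
        simp only [h]
      · have h : x + y - x = y := by omega
        simp only [h]
    rw [hA2, hkey]
    ring
  have hfin : A - B + Cc = (B' - B) + (Cc - C') + (A + C' - B') := by ring
  rw [hfin, h3, sub_self, add_zero]
  exact add_mem h1 h2
end

section
/- For P ∈ Alt^p(F,F), Q ∈ Alt^q(F,F) and F₁ ∈ F, writing P̃ = [P,F₁] and Q̃ = [Q,F₁] for the insertions of F₁, one has (P∧̄Q)(F₁,F₂,…,F_{p+q−1}) = (P∧̄Q̃)(F₂,…,F_{p+q−1}) + (−1)^{q+1}(P̃∧̄Q)(F₂,…,F_{p+q−1}). -/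
/-- `V F p` is the space of `p`-linear alternating maps `F^p → F`, modeled as raw maps
`(Fin p → F) → F`; `V F 0 ≅ F` (0-vectors are elements of `F`). -/
abbrev V (F : Type*) (p : ℕ) : Type _ := (Fin p → F) → F

/-- `P : V F p` is an alternating `p`-vector: multilinear and vanishing whenever two
arguments coincide. -/
def IsAlt {F : Type*} [AddCommGroup F] [Module ℝ F] {p : ℕ} (P : V F p) : Prop :=
  (∀ (v : Fin p → F) (i : Fin p) (x y : F),
      P (Function.update v i (x + y)) = P (Function.update v i x) + P (Function.update v i y)) ∧
  (∀ (v : Fin p → F) (i : Fin p) (c : ℝ) (x : F),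
      P (Function.update v i (c • x)) = c • P (Function.update v i x)) ∧
  (∀ (v : Fin p → F) (i j : Fin p), i ≠ j → v i = v j → P v = 0)

/-- The `(q, N-q)`-shuffles in `S_N`: permutations `I = (i₁,…,i_N)` with
`i₁ < ⋯ < i_q` and `i_{q+1} < ⋯ < i_N`. -/
def Shuffles (N q : ℕ) : Finset (Equiv.Perm (Fin N)) :=
  Finset.univ.filter fun σ =>
    (∀ a b : Fin N, a < b → b.1 < q → σ a < σ b) ∧
    (∀ a b : Fin N, a < b → q ≤ a.1 → σ a < σ b)

/-- The Nijenhuis–Richardson insertion product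
`(P∧̄Q)(F₁,…,F_{p+q-1}) = Σ_{I∈S_{p,q}} (-1)^{|I|} P(Q(F_{i₁},…,F_{i_q}),F_{i_{q+1}},…,F_{i_{p+q-1}})`,
with the convention `P∧̄Q = 0` when `P` is a 0-vector. -/
noncomputable def nrW {F : Type*} [AddCommGroup F] [Module ℝ F] {p q : ℕ}
    (P : V F p) (Q : V F q) : V F (p + q - 1) :=
  if hp : p = 0 then 0
  else fun args =>
    ∑ σ ∈ Shuffles (p + q - 1) q,
      ((Equiv.Perm.sign σ : ℤ) : ℝ) •
        P (fun m => (Fin.cons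
            (Q fun k => args (σ ⟨k.1, by have := k.isLt; omega⟩))
            (fun k : Fin (p - 1) => args (σ ⟨q + k.1, by have := k.isLt; omega⟩)) :
              Fin ((p - 1) + 1) → F)
            (Fin.cast (by omega : p = (p - 1) + 1) m))

/-- The Nijenhuis–Richardson bracket `[P,Q] = (-1)^{(p+1)q} P∧̄Q + (-1)^p Q∧̄P`. -/
noncomputable def nrBr {F : Type*} [AddCommGroup F] [Module ℝ F] {p q : ℕ}
    (P : V F p) (Q : V F q) : V F (p + q - 1) :=
  fun v => ((-1 : ℝ) ^ ((p + 1) * q)) • nrW P Q v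
    + ((-1 : ℝ) ^ p) • nrW Q P (fun k => v (Fin.cast (by omega : q + p - 1 = p + q - 1) k))

/-- Insertion of `x ∈ F` into the first slot: `[Q, x] = Q(x, ·, …, ·) ∈ V^{m-1}`. -/
noncomputable def insert0 {F : Type*} {m : ℕ} (x : F) (Q : V F m) : V F (m - 1) :=
  fun w => Q (fun k => if h : k.1 = 0 then x else w ⟨k.1 - 1, by have := k.isLt; omega⟩)

/-! ### Auxiliary lemmas -/

open Equiv Equiv.Perm

section Aux

variable {F : Type*} [AddCommGroup F] [Module ℝ F]

lemma isAlt_swap {p : ℕ} {P : V F p}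
    (hP : IsAlt P) (v : Fin p → F) (i j : Fin p) (hij : i ≠ j) :
    P (Function.update (Function.update v j (v i)) i (v j)) = - P v := by
  obtain ⟨hadd, -, halt⟩ := hP
  set x := v i with hx
  set y := v j with hy
  have h0 : P (Function.update (Function.update v i (x+y)) j (x+y)) = 0 := by
    apply halt _ i j hij
    simp [Function.update_of_ne hij]
  have h1 : P (Function.update (Function.update v i (x+y)) j (x+y))
      = P (Function.update (Function.update v i (x+y)) j x)
        + P (Function.update (Function.update v i (x+y)) j y) := hadd _ j x y
  have h2 : P (Function.update (Function.update v i (x+y)) j x)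
      = P (Function.update (Function.update v j x) i x)
        + P (Function.update (Function.update v j x) i y) := by
    rw [Function.update_comm hij]
    exact hadd _ i x y
  have h3 : P (Function.update (Function.update v i (x+y)) j y)
      = P (Function.update (Function.update v j y) i x)
        + P (Function.update (Function.update v j y) i y) := by
    rw [Function.update_comm hij]
    exact hadd _ i x y
  have z1 : P (Function.update (Function.update v j x) i x) = 0 := by
    apply halt _ i j hij
    simp [Function.update_of_ne (Ne.symm hij)]
  have z2 : P (Function.update (Function.update v j y) i y) = 0 := by
    apply halt _ i j hij
    simp [Function.update_of_ne (Ne.symm hij)]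
  have e1 : Function.update (Function.update v j y) i x = v := by
    rw [hx, hy, Function.update_eq_self, Function.update_eq_self]
  have goal0 : P (Function.update (Function.update v j x) i y) + P v = 0 := by
    have h := h0
    rw [h1, h2, h3, z1, z2, e1] at h
    rw [← h]; abel
  have heq : Function.update (Function.update v j x) i y
      = Function.update (Function.update v j (v i)) i (v j) := rfl
  rw [← heq]
  exact eq_neg_of_add_eq_zero_left goal0

lemma isAlt_swap01 {p : ℕ} {P : V F (p+2)} (hP : IsAlt P)
    (x y : F) (g : Fin (p+2) → F) :
    P (fun m => if m.1 = 0 then y else if m.1 = 1 then x else g m)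
      = - P (fun m => if m.1 = 0 then x else if m.1 = 1 then y else g m) := by
  have hne : (0 : Fin (p+2)) ≠ 1 := by
    intro h
    have := congrArg Fin.val h
    simp [Fin.val_one] at this
  have h := isAlt_swap hP (fun m => if m.1 = 0 then x else if m.1 = 1 then y else g m) 0 1 hne
  rw [← h]
  refine congrArg P (funext fun m => ?_)
  by_cases h0 : m = 0
  · subst h0
    rw [Function.update_self]
    simp [Fin.val_one]
  · rw [Function.update_of_ne h0]
    by_cases h1 : m = 1
    · subst h1
      rw [Function.update_self]
      simp [Fin.val_one]
    · rw [Function.update_of_ne h1]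
      have hv0 : m.1 ≠ 0 := fun hh => h0 (Fin.ext (by simpa using hh))
      have hv1 : m.1 ≠ 1 := fun hh => h1 (Fin.ext (by simpa [Fin.val_one] using hh))
      simp [hv0, hv1]

lemma mem_shuffles {N q : ℕ} {σ : Equiv.Perm (Fin N)} :
    σ ∈ Shuffles N q ↔
      (∀ a b : Fin N, a < b → b.1 < q → σ a < σ b) ∧
      (∀ a b : Fin N, a < b → q ≤ a.1 → σ a < σ b) := by
  simp [Shuffles]

lemma cons_eval {α : Type*} {p : ℕ} (x : α) (g : Fin p → α) (m : Fin (p+1)) :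
    (Fin.cons x g : Fin (p+1) → α) m = if h : (m : ℕ) = 0 then x else g ⟨m.1 - 1, by omega⟩ := by
  induction m using Fin.cases with
  | zero => simp
  | succ m => simp

lemma nrW_apply {p q N : ℕ}
    (hN : p + 1 + q - 1 = N) (P : V F (p+1)) (Q : V F q) (v : Fin (p + 1 + q - 1) → F) :
    nrW P Q v = ∑ σ ∈ Shuffles N q,
      ((Equiv.Perm.sign σ : ℤ) : ℝ) •
        P (fun m : Fin (p+1) => if h : m.1 = 0
          then Q (fun k : Fin q => v ⟨(σ ⟨k.1, by omega⟩).1, by omega⟩)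
          else v ⟨(σ ⟨q + (m.1 - 1), by omega⟩).1, by omega⟩) := by
  subst hN
  rw [nrW, dif_neg (by omega : ¬ (p+1 = 0))]
  refine Finset.sum_congr rfl fun σ _ => ?_
  refine congrArg (fun z => ((Equiv.Perm.sign σ : ℤ) : ℝ) • P z) (funext fun m => ?_)
  rw [cons_eval]
  by_cases h : m.1 = 0
  · simp only [Fin.coe_cast, h, dif_pos]
  · simp only [Fin.coe_cast, h, dif_neg, not_false_iff]

end Aux

section DecFin

lemma dec_fst {n : ℕ} (σ : Perm (Fin (n+1))) (h0 : σ 0 = 0) :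
    (Equiv.Perm.decomposeFin σ).1 = 0 := by
  have h := Equiv.symm_apply_apply Equiv.Perm.decomposeFin σ
  have h2 : Equiv.Perm.decomposeFin.symm
      ((Equiv.Perm.decomposeFin σ).1, (Equiv.Perm.decomposeFin σ).2) 0
      = (Equiv.Perm.decomposeFin σ).1 :=
    Equiv.Perm.decomposeFin_symm_apply_zero _ _
  rw [Prod.mk.eta, h] at h2
  rw [← h2, h0]

lemma dec_symm_eq {n : ℕ} (σ : Perm (Fin (n+1))) (h0 : σ 0 = 0) :
    Equiv.Perm.decomposeFin.symm (0, (Equiv.Perm.decomposeFin σ).2) = σ := by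
  rw [← dec_fst σ h0, Prod.mk.eta, Equiv.symm_apply_apply]

lemma jdef_zero {n : ℕ} (e : Perm (Fin n)) :
    Equiv.Perm.decomposeFin.symm (0, e) 0 = 0 :=
  Equiv.Perm.decomposeFin_symm_apply_zero _ _

lemma jdef_succ {n : ℕ} (e : Perm (Fin n)) (x : Fin n) :
    Equiv.Perm.decomposeFin.symm (0, e) x.succ = (e x).succ := by
  rw [Equiv.Perm.decomposeFin_symm_apply_succ, Equiv.swap_self]
  rfl

lemma jdef_sign {n : ℕ} (e : Perm (Fin n)) :
    Equiv.Perm.sign (Equiv.Perm.decomposeFin.symm (0, e)) = Equiv.Perm.sign e := by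
  rw [Equiv.Perm.decomposeFin.symm_sign, if_pos rfl, one_mul]

lemma jdef_val {n : ℕ} (e : Perm (Fin n)) (k : ℕ) (h1 : 1 ≤ k) (h2 : k < n+1) :
    ((Equiv.Perm.decomposeFin.symm (0, e) : Perm (Fin (n+1))) ⟨k, h2⟩).1
      = (e ⟨k-1, by omega⟩).1 + 1 := by
  have hx : (⟨k, h2⟩ : Fin (n+1)) = (⟨k-1, by omega⟩ : Fin n).succ := by
    simp [Fin.ext_iff]; omega
  rw [hx, jdef_succ]
  simp

lemma rel_succ_val {n : ℕ} (σ : Perm (Fin (n+1))) (h0 : σ 0 = 0) (k : ℕ)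
    (h1 : 1 ≤ k) (h2 : k < n+1) :
    (σ ⟨k, h2⟩).1 = ((Equiv.Perm.decomposeFin σ).2 ⟨k-1, by omega⟩).1 + 1 := by
  conv_lhs => rw [← dec_symm_eq σ h0]
  exact jdef_val _ k h1 h2

end DecFin

section Mem

lemma memA_fwd {n q : ℕ} {σ : Perm (Fin (n+1))} {τ : Perm (Fin n)}
    (hrel : ∀ (k : ℕ) (hk : 1 ≤ k) (h2 : k < n+1), (σ ⟨k, h2⟩).1 = (τ ⟨k-1, by omega⟩).1 + 1)
    (hσ : σ ∈ Shuffles (n+1) (q+1)) : τ ∈ Shuffles n q := by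
  rw [mem_shuffles] at hσ ⊢
  obtain ⟨hσ1, hσ2⟩ := hσ
  constructor
  · rintro ⟨a, ha⟩ ⟨b, hb⟩ hab hbq
    rw [Fin.lt_def] at hab ⊢
    simp only at hab hbq
    have h1 := hrel (a+1) (by omega) (by omega)
    have h2 := hrel (b+1) (by omega) (by omega)
    have h3 := hσ1 ⟨a+1, by omega⟩ ⟨b+1, by omega⟩ (Fin.mk_lt_mk.mpr (by omega)) (by show b+1 < q+1; omega)
    rw [Fin.lt_def] at h3
    simp only [Nat.add_sub_cancel] at h1 h2
    omega
  · rintro ⟨a, ha⟩ ⟨b, hb⟩ hab haq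
    rw [Fin.lt_def] at hab ⊢
    simp only at hab haq
    have h1 := hrel (a+1) (by omega) (by omega)
    have h2 := hrel (b+1) (by omega) (by omega)
    have h3 := hσ2 ⟨a+1, by omega⟩ ⟨b+1, by omega⟩ (Fin.mk_lt_mk.mpr (by omega)) (by show q+1 ≤ a+1; omega)
    rw [Fin.lt_def] at h3
    simp only [Nat.add_sub_cancel] at h1 h2
    omega

lemma memA_bwd {n q : ℕ} {σ : Perm (Fin (n+1))} {τ : Perm (Fin n)}
    (h0 : σ 0 = 0)
    (hrel : ∀ (k : ℕ) (hk : 1 ≤ k) (h2 : k < n+1), (σ ⟨k, h2⟩).1 = (τ ⟨k-1, by omega⟩).1 + 1)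
    (hτ : τ ∈ Shuffles n q) : σ ∈ Shuffles (n+1) (q+1) := by
  rw [mem_shuffles] at hτ ⊢
  obtain ⟨hτ1, hτ2⟩ := hτ
  have h0' : ∀ h2 : (0:ℕ) < n+1, (σ ⟨0, h2⟩).1 = 0 := fun _ => by
    rw [show (⟨0, by omega⟩ : Fin (n+1)) = 0 from rfl, h0]; rfl
  constructor
  · rintro ⟨a, ha⟩ ⟨b, hb⟩ hab hbq
    rw [Fin.lt_def] at hab ⊢
    simp only at hab hbq
    have hb1 := hrel b (by omega) (by omega)
    rcases Nat.eq_zero_or_pos a with rfl | hapos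
    · rw [h0' ha]; omega
    · have ha1 := hrel a (by omega) (by omega)
      have h3 := hτ1 ⟨a-1, by omega⟩ ⟨b-1, by omega⟩ (Fin.mk_lt_mk.mpr (by omega)) (by show b-1 < q; omega)
      rw [Fin.lt_def] at h3
      omega
  · rintro ⟨a, ha⟩ ⟨b, hb⟩ hab haq
    rw [Fin.lt_def] at hab ⊢
    simp only at hab haq
    have hb1 := hrel b (by omega) (by omega)
    have ha1 := hrel a (by omega) (by omega)
    have h3 := hτ2 ⟨a-1, by omega⟩ ⟨b-1, by omega⟩ (Fin.mk_lt_mk.mpr (by omega)) (by show q ≤ a-1; omega)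
    rw [Fin.lt_def] at h3
    omega

/-- structural lemma: a `(q+1)`-shuffle not fixing `0` sends position `q+1` to `0`. -/
lemma shuffle_zero {n q : ℕ} {σ : Perm (Fin (n+1))} (hσ : σ ∈ Shuffles (n+1) (q+1))
    (h0 : σ 0 ≠ 0) : ∃ h : q + 1 < n + 1, σ ⟨q+1, h⟩ = 0 := by
  rw [mem_shuffles] at hσ
  obtain ⟨hσ1, hσ2⟩ := hσ
  obtain ⟨a, ha⟩ : ∃ a, σ a = 0 := ⟨σ.symm 0, σ.apply_symm_apply 0⟩
  have hane : a ≠ 0 := by rintro rfl; exact h0 ha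
  have hav : a.1 ≠ 0 := fun h => hane (Fin.ext (by simpa using h))
  have hage : q + 1 ≤ a.1 := by
    by_contra hlt
    have := hσ1 0 a (by rw [Fin.lt_def, Fin.val_zero]; omega) (by omega)
    rw [ha] at this
    exact absurd this (Fin.not_lt_zero _)
  have haeq : a.1 = q + 1 := by
    by_contra hne
    have hq : q + 1 < n + 1 := by have := a.isLt; omega
    have := hσ2 ⟨q+1, hq⟩ a (by rw [Fin.lt_def]; simp; omega) (by simp)
    rw [ha] at this
    exact absurd this (Fin.not_lt_zero _)
  have hq : q + 1 < n + 1 := by have := a.isLt; omega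
  refine ⟨hq, ?_⟩
  have : (⟨q+1, hq⟩ : Fin (n+1)) = a := by simp [Fin.ext_iff]; omega
  rw [this, ha]

lemma memB_fwd {n q : ℕ} (hqn : q + 1 ≤ n) {σ : Perm (Fin (n+1))} {τ : Perm (Fin n)}
    (hrelA : ∀ (k : ℕ) (h2 : k < n+1) (hk : k ≤ q), (σ ⟨k, h2⟩).1 = (τ ⟨k, by omega⟩).1 + 1)
    (hrelB : ∀ (k : ℕ) (h2 : k < n+1) (hk : q+2 ≤ k), (σ ⟨k, h2⟩).1 = (τ ⟨k-1, by omega⟩).1 + 1)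
    (hσ : σ ∈ Shuffles (n+1) (q+1)) : τ ∈ Shuffles n (q+1) := by
  rw [mem_shuffles] at hσ ⊢
  obtain ⟨hσ1, hσ2⟩ := hσ
  constructor
  · rintro ⟨a, ha⟩ ⟨b, hb⟩ hab hbq
    rw [Fin.lt_def] at hab ⊢
    simp only at hab hbq
    have h1 := hrelA a (by omega) (by omega)
    have h2 := hrelA b (by omega) (by omega)
    have h3 := hσ1 ⟨a, by omega⟩ ⟨b, by omega⟩ (Fin.mk_lt_mk.mpr (by omega)) (by show b < q+1; omega)
    rw [Fin.lt_def] at h3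
    omega
  · rintro ⟨a, ha⟩ ⟨b, hb⟩ hab haq
    rw [Fin.lt_def] at hab ⊢
    simp only at hab haq
    have h1 := hrelB (a+1) (by omega) (by omega)
    have h2 := hrelB (b+1) (by omega) (by omega)
    have h3 := hσ2 ⟨a+1, by omega⟩ ⟨b+1, by omega⟩ (Fin.mk_lt_mk.mpr (by omega)) (by show q+1 ≤ a+1; omega)
    rw [Fin.lt_def] at h3
    simp only [Nat.add_sub_cancel] at h1 h2
    omega

lemma memB_bwd {n q : ℕ} (hqn : q + 1 ≤ n) {σ : Perm (Fin (n+1))} {τ : Perm (Fin n)}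
    (hq1 : σ ⟨q+1, by omega⟩ = 0)
    (hrelA : ∀ (k : ℕ) (h2 : k < n+1) (hk : k ≤ q), (σ ⟨k, h2⟩).1 = (τ ⟨k, by omega⟩).1 + 1)
    (hrelB : ∀ (k : ℕ) (h2 : k < n+1) (hk : q+2 ≤ k), (σ ⟨k, h2⟩).1 = (τ ⟨k-1, by omega⟩).1 + 1)
    (hτ : τ ∈ Shuffles n (q+1)) : σ ∈ Shuffles (n+1) (q+1) := by
  rw [mem_shuffles] at hτ ⊢
  obtain ⟨hτ1, hτ2⟩ := hτ
  constructor
  · rintro ⟨a, ha⟩ ⟨b, hb⟩ hab hbq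
    rw [Fin.lt_def] at hab ⊢
    simp only at hab hbq
    have h1 := hrelA a (by omega) (by omega)
    have h2 := hrelA b (by omega) (by omega)
    have h3 := hτ1 ⟨a, by omega⟩ ⟨b, by omega⟩ (Fin.mk_lt_mk.mpr (by omega)) (by show b < q+1; omega)
    rw [Fin.lt_def] at h3
    omega
  · rintro ⟨a, ha⟩ ⟨b, hb⟩ hab haq
    rw [Fin.lt_def] at hab ⊢
    simp only at hab haq
    have h2 := hrelB b (by omega) (by omega)
    rcases Nat.eq_or_lt_of_le haq with heq | hgt
    · have hza : (σ ⟨a, ha⟩).1 = 0 := by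
        rw [show (⟨a, ha⟩ : Fin (n+1)) = ⟨q+1, by omega⟩ from Fin.ext (by simp; omega)]
        simpa using congrArg Fin.val hq1
      omega
    · have h1 := hrelB a (by omega) (by omega)
      have h3 := hτ2 ⟨a-1, by omega⟩ ⟨b-1, by omega⟩ (Fin.mk_lt_mk.mpr (by omega)) (by show q+1 ≤ a-1; omega)
      rw [Fin.lt_def] at h3
      omega

end Mem
section CoreA

variable {F : Type*} [AddCommGroup F] [Module ℝ F]

lemma coreA {p' q : ℕ} (P : V F (p'+1)) (Q : V F (q+1)) (args : ℕ → F) :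
    ∑ σ ∈ (Shuffles (p'+q+1) (q+1)).filter (fun σ => σ 0 = 0),
      ((Equiv.Perm.sign σ : ℤ) : ℝ) •
        P (fun m : Fin (p'+1) => if h : m.1 = 0
          then Q (fun k : Fin (q+1) => args (σ ⟨k.1, by omega⟩).1)
          else args (σ ⟨q+1+(m.1-1), by omega⟩).1)
    = ∑ τ ∈ Shuffles (p'+q) q,
      ((Equiv.Perm.sign τ : ℤ) : ℝ) •
        P (fun m : Fin (p'+1) => if h : m.1 = 0
          then Q (fun k : Fin (q+1) => if hk : k.1 = 0 then args 0
            else args ((τ ⟨k.1-1, by omega⟩).1 + 1))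
          else args ((τ ⟨q+(m.1-1), by omega⟩).1 + 1)) := by
  refine Finset.sum_nbij' (fun σ => (Equiv.Perm.decomposeFin σ).2)
    (fun τ => Equiv.Perm.decomposeFin.symm (0, τ)) ?_ ?_ ?_ ?_ ?_
  · intro σ hσ
    rw [Finset.mem_filter] at hσ
    exact memA_fwd (fun k hk h2 => rel_succ_val σ hσ.2 k hk h2) hσ.1
  · intro τ hτ
    rw [Finset.mem_filter]
    exact ⟨memA_bwd (jdef_zero τ) (fun k hk h2 => jdef_val τ k hk h2) hτ, jdef_zero τ⟩
  · intro σ hσ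
    rw [Finset.mem_filter] at hσ
    exact dec_symm_eq σ hσ.2
  · intro τ hτ
    exact congrArg Prod.snd (Equiv.apply_symm_apply Equiv.Perm.decomposeFin (0, τ))
  · intro σ hσ
    rw [Finset.mem_filter] at hσ
    obtain ⟨hσS, hσ0⟩ := hσ
    have hsgn : Equiv.Perm.sign σ = Equiv.Perm.sign (Equiv.Perm.decomposeFin σ).2 := by
      have h := jdef_sign (Equiv.Perm.decomposeFin σ).2
      rw [dec_symm_eq σ hσ0] at h
      exact h
    rw [hsgn]
    refine congrArg (fun z => ((Equiv.Perm.sign (Equiv.Perm.decomposeFin σ).2 : ℤ) : ℝ) • P z)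
      (funext fun m => ?_)
    by_cases hm : m.1 = 0
    · rw [dif_pos hm, dif_pos hm]
      refine congrArg Q (funext fun k => ?_)
      by_cases hk : k.1 = 0
      · rw [dif_pos hk]
        have h00 : (⟨k.1, by omega⟩ : Fin (p'+q+1)) = 0 := Fin.ext (by simpa using hk)
        rw [h00, hσ0]
        rfl
      · rw [dif_neg hk]
        exact congrArg args (rel_succ_val σ hσ0 k.1 (by omega) (by omega))
    · rw [dif_neg hm, dif_neg hm]
      have h := rel_succ_val σ hσ0 (q+1+(m.1-1)) (by omega) (by omega)
      have hidx : (⟨q+1+(m.1-1)-1, by omega⟩ : Fin (p'+q))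
          = ⟨q+(m.1-1), by omega⟩ := Fin.ext (by show q+1+(m.1-1)-1 = q+(m.1-1); omega)
      rw [hidx] at h
      exact congrArg args h

end CoreA
section CycFacts

open Equiv Equiv.Perm

lemma cyc_le {n q : ℕ} (hq : q+1 < n+1) (x : ℕ) (hx2 : x < n+1) (hx : x ≤ q) :
    Fin.cycleRange (⟨q+1, hq⟩ : Fin (n+1)) ⟨x, hx2⟩ = ⟨x+1, by omega⟩ := by
  have h := Fin.coe_cycleRange_of_lt (j := (⟨q+1, hq⟩ : Fin (n+1))) (i := ⟨x, hx2⟩)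
    (Fin.mk_lt_mk.mpr (by omega))
  exact Fin.ext (by rw [h])

lemma cyc_gt {n q : ℕ} (hq : q+1 < n+1) (x : ℕ) (hx2 : x < n+1) (hx : q+2 ≤ x) :
    Fin.cycleRange (⟨q+1, hq⟩ : Fin (n+1)) ⟨x, hx2⟩ = ⟨x, hx2⟩ :=
  Fin.cycleRange_of_gt (Fin.mk_lt_mk.mpr (by omega))

lemma jB_q1 {n q : ℕ} (hq : q+1 < n+1) (e : Perm (Fin n)) :
    (Equiv.Perm.decomposeFin.symm (0, e) * Fin.cycleRange ⟨q+1, hq⟩) ⟨q+1, hq⟩ = 0 := by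
  rw [Equiv.Perm.mul_apply, Fin.cycleRange_self, jdef_zero]

lemma jB_relA {n q : ℕ} (hq : q+1 < n+1) (e : Perm (Fin n)) (k : ℕ) (h2 : k < n+1) (hk : k ≤ q) :
    ((Equiv.Perm.decomposeFin.symm (0, e) * Fin.cycleRange ⟨q+1, hq⟩) ⟨k, h2⟩).1
      = (e ⟨k, by omega⟩).1 + 1 := by
  rw [Equiv.Perm.mul_apply, cyc_le hq k h2 hk]
  have h := jdef_val e (k+1) (by omega) (by omega)
  rwa [show (⟨k+1-1, by omega⟩ : Fin n) = ⟨k, by omega⟩ from Fin.ext (by show k+1-1 = k; omega)] at h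

lemma jB_relB {n q : ℕ} (hq : q+1 < n+1) (e : Perm (Fin n)) (k : ℕ) (h2 : k < n+1) (hk : q+2 ≤ k) :
    ((Equiv.Perm.decomposeFin.symm (0, e) * Fin.cycleRange ⟨q+1, hq⟩) ⟨k, h2⟩).1
      = (e ⟨k-1, by omega⟩).1 + 1 := by
  rw [Equiv.Perm.mul_apply, cyc_gt hq k h2 hk]
  exact jdef_val e k (by omega) h2

lemma jB_sign {n q : ℕ} (hq : q+1 < n+1) (e : Perm (Fin n)) :
    Equiv.Perm.sign (Equiv.Perm.decomposeFin.symm (0, e) * Fin.cycleRange ⟨q+1, hq⟩)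
      = (-1)^(q+1) * Equiv.Perm.sign e := by
  rw [map_mul, jdef_sign, Fin.sign_cycleRange]
  exact mul_comm _ _

lemma sigma_eq {n q : ℕ} (hq : q+1 < n+1) (σ : Perm (Fin (n+1)))
    (hq1 : σ ⟨q+1, hq⟩ = 0) :
    Equiv.Perm.decomposeFin.symm
        (0, (Equiv.Perm.decomposeFin (σ * (Fin.cycleRange ⟨q+1, hq⟩)⁻¹)).2)
      * Fin.cycleRange ⟨q+1, hq⟩ = σ := by
  have hτ0 : (σ * (Fin.cycleRange (⟨q+1, hq⟩ : Fin (n+1)))⁻¹) 0 = 0 := by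
    rw [Equiv.Perm.mul_apply]
    have hcinv : (Fin.cycleRange (⟨q+1, hq⟩ : Fin (n+1)))⁻¹ 0 = ⟨q+1, hq⟩ := by
      rw [Equiv.Perm.inv_eq_iff_eq]
      exact (Fin.cycleRange_self _).symm
    rw [hcinv, hq1]
  rw [dec_symm_eq _ hτ0, inv_mul_cancel_right]

end CycFacts
section CoreB

open Equiv Equiv.Perm

variable {F : Type*} [AddCommGroup F] [Module ℝ F]

lemma coreB {p'' q : ℕ} (P : V F (p''+1+1)) (Q : V F (q+1)) (hP : IsAlt P) (args : ℕ → F) :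
    ∑ σ ∈ (Shuffles (p''+1+q+1) (q+1)).filter (fun σ => ¬ σ 0 = 0),
      ((Equiv.Perm.sign σ : ℤ) : ℝ) •
        P (fun m : Fin (p''+1+1) => if h : m.1 = 0
          then Q (fun k : Fin (q+1) => args (σ ⟨k.1, by omega⟩).1)
          else args (σ ⟨q+1+(m.1-1), by omega⟩).1)
    = (-1 : ℝ)^(q+1+1) • ∑ τ ∈ Shuffles (p''+1+q) (q+1),
      ((Equiv.Perm.sign τ : ℤ) : ℝ) •
        P (fun m : Fin (p''+1+1) => if h : m.1 = 0 then args 0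
          else if h' : m.1 - 1 = 0
            then Q (fun k : Fin (q+1) => args ((τ ⟨k.1, by omega⟩).1 + 1))
            else args ((τ ⟨q+1+(m.1-1-1), by omega⟩).1 + 1)) := by
  have hq : q + 1 < p''+1+q+1 := by omega
  rw [Finset.smul_sum]
  refine Finset.sum_nbij'
    (fun σ => (Equiv.Perm.decomposeFin (σ * (Fin.cycleRange (⟨q+1, hq⟩ : Fin (p''+1+q+1)))⁻¹)).2)
    (fun τ => Equiv.Perm.decomposeFin.symm (0, τ) * Fin.cycleRange (⟨q+1, hq⟩ : Fin (p''+1+q+1)))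
    ?_ ?_ ?_ ?_ ?_
  · -- forward membership
    intro σ hσ
    rw [Finset.mem_filter] at hσ
    obtain ⟨hσS, hσ0⟩ := hσ
    obtain ⟨hh, hq1⟩ := shuffle_zero hσS hσ0
    have hq1' : σ ⟨q+1, hq⟩ = 0 := hq1
    have hσeq := sigma_eq hq σ hq1'
    refine memB_fwd (by omega) (fun k h2 hk => ?_) (fun k h2 hk => ?_) hσS
    · conv_lhs => rw [← hσeq]
      exact jB_relA hq _ k h2 hk
    · conv_lhs => rw [← hσeq]
      exact jB_relB hq _ k h2 hk
  · -- backward membership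
    intro τ hτ
    rw [Finset.mem_filter]
    constructor
    · exact memB_bwd (by omega) (jB_q1 hq τ)
        (fun k h2 hk => jB_relA hq τ k h2 hk) (fun k h2 hk => jB_relB hq τ k h2 hk) hτ
    · intro hcon
      have hval : ((Equiv.Perm.decomposeFin.symm (0, τ)
          * Fin.cycleRange (⟨q+1, hq⟩ : Fin (p''+1+q+1))) 0).1
          = (τ ⟨0, by omega⟩).1 + 1 := jB_relA hq τ 0 (by omega) (by omega)
      rw [hcon] at hval
      simp at hval
  · -- left inverse
    intro σ hσ
    rw [Finset.mem_filter] at hσ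
    obtain ⟨hσS, hσ0⟩ := hσ
    obtain ⟨hh, hq1⟩ := shuffle_zero hσS hσ0
    have hq1' : σ ⟨q+1, hq⟩ = 0 := hq1
    exact sigma_eq hq σ hq1'
  · -- right inverse
    intro τ hτ
    rw [mul_inv_cancel_right, Equiv.apply_symm_apply]
  · -- term equality
    intro σ hσ
    rw [Finset.mem_filter] at hσ
    obtain ⟨hσS, hσ0⟩ := hσ
    obtain ⟨hh, hq1⟩ := shuffle_zero hσS hσ0
    have hq1' : σ ⟨q+1, hq⟩ = 0 := hq1
    have hσeq := sigma_eq hq σ hq1'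
    set e := (Equiv.Perm.decomposeFin
      (σ * (Fin.cycleRange (⟨q+1, hq⟩ : Fin (p''+1+q+1)))⁻¹)).2 with he
    have hrelA : ∀ (k : ℕ) (h2 : k < p''+1+q+1) (hk : k ≤ q),
        (σ ⟨k, h2⟩).1 = (e ⟨k, by omega⟩).1 + 1 := by
      intro k h2 hk
      conv_lhs => rw [← hσeq]
      exact jB_relA hq _ k h2 hk
    have hrelB : ∀ (k : ℕ) (h2 : k < p''+1+q+1) (hk : q+2 ≤ k),
        (σ ⟨k, h2⟩).1 = (e ⟨k-1, by omega⟩).1 + 1 := by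
      intro k h2 hk
      conv_lhs => rw [← hσeq]
      exact jB_relB hq _ k h2 hk
    have hsgn : Equiv.Perm.sign σ = (-1)^(q+1) * Equiv.Perm.sign e := by
      conv_lhs => rw [← hσeq]
      exact jB_sign hq e
    have hsgnR : ((Equiv.Perm.sign σ : ℤ) : ℝ)
        = (-1:ℝ)^(q+1) * ((Equiv.Perm.sign e : ℤ) : ℝ) := by
      rw [hsgn]
      push_cast
      ring
    set x0 := args 0 with hx0
    set Qv := Q (fun k : Fin (q+1) => args ((e ⟨k.1, by omega⟩).1 + 1)) with hQv
    have hQeq : Q (fun k : Fin (q+1) => args (σ ⟨k.1, by omega⟩).1) = Qv := by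
      rw [hQv]
      refine congrArg Q (funext fun k => ?_)
      exact congrArg args (hrelA k.1 (by omega) (by omega))
    have hclaim2 : (fun m : Fin (p''+1+1) => if h : m.1 = 0
          then Q (fun k : Fin (q+1) => args (σ ⟨k.1, by omega⟩).1)
          else args (σ ⟨q+1+(m.1-1), by omega⟩).1)
        = (fun m : Fin (p''+1+1) => if m.1 = 0 then Qv else if m.1 = 1 then x0
            else if hg : q+1+(m.1-1-1) < p''+1+q
              then args ((e ⟨q+1+(m.1-1-1), hg⟩).1 + 1) else x0) := by
      funext m
      by_cases hm0 : m.1 = 0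
      · rw [dif_pos hm0, if_pos hm0, hQeq]
      · rw [dif_neg hm0, if_neg hm0]
        by_cases hm1 : m.1 = 1
        · rw [if_pos hm1]
          have hidx : (⟨q+1+(m.1-1), by omega⟩ : Fin (p''+1+q+1)) = ⟨q+1, hq⟩ :=
            Fin.ext (by show q+1+(m.1-1) = q+1; omega)
          rw [hidx, hq1']
          rfl
        · rw [if_neg hm1, dif_pos (show q+1+(m.1-1-1) < p''+1+q by omega)]
          have h := hrelB (q+1+(m.1-1)) (by omega) (by omega)
          rw [show (⟨q+1+(m.1-1)-1, by omega⟩ : Fin (p''+1+q)) = ⟨q+1+(m.1-1-1), by omega⟩ from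
            Fin.ext (by show q+1+(m.1-1)-1 = q+1+(m.1-1-1); omega)] at h
          exact congrArg args h
    have hclaim1 : (fun m : Fin (p''+1+1) => if h : m.1 = 0 then x0
          else if h' : m.1 - 1 = 0
            then Q (fun k : Fin (q+1) => args ((e ⟨k.1, by omega⟩).1 + 1))
            else args ((e ⟨q+1+(m.1-1-1), by omega⟩).1 + 1))
        = (fun m : Fin (p''+1+1) => if m.1 = 0 then x0 else if m.1 = 1 then Qv
            else if hg : q+1+(m.1-1-1) < p''+1+q
              then args ((e ⟨q+1+(m.1-1-1), hg⟩).1 + 1) else x0) := by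
      funext m
      by_cases hm0 : m.1 = 0
      · rw [dif_pos hm0, if_pos hm0]
      · rw [dif_neg hm0, if_neg hm0]
        by_cases hm1 : m.1 = 1
        · rw [dif_pos (show m.1 - 1 = 0 by omega), if_pos hm1]
        · rw [dif_neg (show ¬ m.1 - 1 = 0 by omega), if_neg hm1,
            dif_pos (show q+1+(m.1-1-1) < p''+1+q by omega)]
    have hswap : P (fun m : Fin (p''+1+1) => if h : m.1 = 0
          then Q (fun k : Fin (q+1) => args (σ ⟨k.1, by omega⟩).1)
          else args (σ ⟨q+1+(m.1-1), by omega⟩).1)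
        = - P (fun m : Fin (p''+1+1) => if h : m.1 = 0 then x0
          else if h' : m.1 - 1 = 0
            then Q (fun k : Fin (q+1) => args ((e ⟨k.1, by omega⟩).1 + 1))
            else args ((e ⟨q+1+(m.1-1-1), by omega⟩).1 + 1)) := by
      rw [hclaim2, hclaim1]
      exact isAlt_swap01 hP x0 Qv _
    rw [hswap, smul_neg, ← neg_smul, smul_smul]
    congr 1
    rw [hsgnR]
    ring

end CoreB

/-! ### Main theorem -/

/-- For `P ∈ Alt^p(F,F)`, `Q ∈ Alt^q(F,F)` and `F₁ ∈ F`, with `P̃ = [P,F₁]`, `Q̃ = [Q,F₁]`: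
`(P∧̄Q)(F₁,F₂,…,F_{p+q-1}) = (P∧̄Q̃)(F₂,…,F_{p+q-1}) + (-1)^{q+1}(P̃∧̄Q)(F₂,…,F_{p+q-1})`.
Here the arguments `F₁,F₂,…` are given by the sequence `args : ℕ → F`, and the arity of
`Q` is written as `q+1` so that insertion of `F₁` into `Q` makes sense. -/
theorem stmt12 {F : Type*} [AddCommGroup F] [Module ℝ F] {p q : ℕ}
    (P : V F p) (Q : V F (q + 1)) (hP : IsAlt P) (hQ : IsAlt Q) (args : ℕ → F) :
    nrW P Q (fun k => args k.1)
      = nrW P (insert0 (args 0) Q) (fun k => args (k.1 + 1))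
        + ((-1 : ℝ) ^ (q + 1 + 1)) • nrW (insert0 (args 0) P) Q (fun k => args (k.1 + 1)) := by
  rcases p with _ | p'
  · simp [nrW]
  rcases p' with _ | p''
  · -- p = 1 : the second summand vanishes
    have h1 : nrW P Q (fun k => args k.1) = ∑ σ ∈ Shuffles (0+q+1) (q+1),
        ((Equiv.Perm.sign σ : ℤ) : ℝ) •
          P (fun m : Fin (0+1) => if h : m.1 = 0
            then Q (fun k : Fin (q+1) => args (σ ⟨k.1, by omega⟩).1)
            else args (σ ⟨q+1+(m.1-1), by omega⟩).1) :=
      nrW_apply (by omega) P Q _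
    have h2 : nrW P (insert0 (args 0) Q) (fun k => args (k.1 + 1))
        = ∑ τ ∈ Shuffles (0+q) q,
        ((Equiv.Perm.sign τ : ℤ) : ℝ) •
          P (fun m : Fin (0+1) => if h : m.1 = 0
            then Q (fun k : Fin (q+1) => if hk : k.1 = 0 then args 0
              else args ((τ ⟨k.1-1, by omega⟩).1 + 1))
            else args ((τ ⟨q+(m.1-1), by omega⟩).1 + 1)) :=
      nrW_apply (by omega) P (insert0 (args 0) Q) _
    have h3 : nrW (insert0 (args 0) P) Q (fun k => args (k.1 + 1)) = 0 := by
      simp [nrW]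
    rw [h1, h2, h3, smul_zero, add_zero]
    rw [← Finset.sum_filter_add_sum_filter_not (Shuffles (0+q+1) (q+1)) (fun σ => σ 0 = 0)]
    have hempty : (Shuffles (0+q+1) (q+1)).filter (fun σ => ¬ σ 0 = 0) = ∅ := by
      refine Finset.eq_empty_of_forall_notMem (fun σ hσ => ?_)
      rw [Finset.mem_filter] at hσ
      obtain ⟨hh, -⟩ := shuffle_zero hσ.1 hσ.2
      omega
    rw [hempty, Finset.sum_empty, add_zero]
    exact coreA P Q args
  · -- p = p'' + 2
    have h1 : nrW P Q (fun k => args k.1) = ∑ σ ∈ Shuffles (p''+1+q+1) (q+1),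
        ((Equiv.Perm.sign σ : ℤ) : ℝ) •
          P (fun m : Fin (p''+1+1) => if h : m.1 = 0
            then Q (fun k : Fin (q+1) => args (σ ⟨k.1, by omega⟩).1)
            else args (σ ⟨q+1+(m.1-1), by omega⟩).1) :=
      nrW_apply (by omega) P Q _
    have h2 : nrW P (insert0 (args 0) Q) (fun k => args (k.1 + 1))
        = ∑ τ ∈ Shuffles (p''+1+q) q,
        ((Equiv.Perm.sign τ : ℤ) : ℝ) •
          P (fun m : Fin (p''+1+1) => if h : m.1 = 0
            then Q (fun k : Fin (q+1) => if hk : k.1 = 0 then args 0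
              else args ((τ ⟨k.1-1, by omega⟩).1 + 1))
            else args ((τ ⟨q+(m.1-1), by omega⟩).1 + 1)) :=
      nrW_apply (by omega) P (insert0 (args 0) Q) _
    have h3 : nrW (insert0 (args 0) P) Q (fun k => args (k.1 + 1))
        = ∑ τ ∈ Shuffles (p''+1+q) (q+1),
        ((Equiv.Perm.sign τ : ℤ) : ℝ) •
          P (fun m : Fin (p''+1+1) => if h : m.1 = 0 then args 0
            else if h' : m.1 - 1 = 0
              then Q (fun k : Fin (q+1) => args ((τ ⟨k.1, by omega⟩).1 + 1))
              else args ((τ ⟨q+1+(m.1-1-1), by omega⟩).1 + 1)) :=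
      nrW_apply (p := p'') (q := q+1) (by omega) (insert0 (args 0) P) Q _
    rw [h1, h2, h3]
    rw [← Finset.sum_filter_add_sum_filter_not (Shuffles (p''+1+q+1) (q+1)) (fun σ => σ 0 = 0)]
    rw [coreA P Q args, coreB P Q hP args]
end

section
/- Under the coordinate transformation ṽ¹ = (1/2)·(Σ_{k,l} η_{kl} v^k v^l)/v^n, ṽ^i = v^i/v^n for 1 < i < n, ṽ^n = −1/v^n (defined where v^n ≠ 0), the conformally rescaled contravariant metric (v^n)² η^{ij} transforms to a metric whose components in the coordinates ṽ are again the constant matrix η^{ij}; that is, Σ_{k,l} (∂ṽ^i/∂v^k)(∂ṽ^j/∂v^l)(v^n)² η^{kl} = η^{ij}. -/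
/-- The partial derivative `∂f/∂v^k` of a function on `ℝ^n`. -/
noncomputable def pdF {n : ℕ} (k : Fin n) (f : (Fin n → ℝ) → ℝ) : (Fin n → ℝ) → ℝ :=
  fun x => fderiv ℝ f x (Pi.single k 1)

/-- The constant anti-diagonal metric `η_{ij} = δ_{i,n+1-j}` (0-indexed: `i + j = n-1`);
its inverse `η^{ij}` is given by the same matrix. -/
def etaM (n : ℕ) (k l : Fin n) : ℝ := if k.1 + l.1 = n - 1 then 1 else 0

/-- The inverted flat coordinates `ṽ¹ = (1/2)(Σ η_{kl}v^k v^l)/v^n`, `ṽ^i = v^i/v^n`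
(for `1 < i < n`), `ṽ^n = -1/v^n`, on the open set `{v^n ≠ 0}` (here `n = m+2`). -/
noncomputable def vtil (m : ℕ) (i : Fin (m + 2)) (v : Fin (m + 2) → ℝ) : ℝ :=
  if i.1 = 0 then (∑ k, ∑ l, etaM (m + 2) k l * v k * v l) / (2 * v (Fin.last (m + 1)))
  else if i.1 = m + 1 then -1 / v (Fin.last (m + 1))
  else v i / v (Fin.last (m + 1))

namespace Stmt16Aux

open ContinuousLinearMap

lemma rev_eq_comm {n : ℕ} {a k : Fin n} : Fin.rev a = k ↔ a = Fin.rev k := by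
  constructor <;> rintro rfl <;> simp [Fin.rev_rev]

lemma etaM_rev {m : ℕ} (k l : Fin (m+2)) :
    etaM (m+2) k l = if l = Fin.rev k then 1 else 0 := by
  have h : (k.1 + l.1 = m + 2 - 1) ↔ l = Fin.rev k := by
    rw [Fin.ext_iff, Fin.val_rev]
    have := k.isLt; have := l.isLt
    omega
  simp only [etaM, h]

lemma Qsum {m : ℕ} (v : Fin (m+2) → ℝ) :
    (∑ k, ∑ l, etaM (m + 2) k l * v k * v l) = ∑ a, v a * v (Fin.rev a) := by
  refine Finset.sum_congr rfl fun k _ => ?_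
  simp [etaM_rev, ite_mul, Finset.sum_ite_eq']

variable {m : ℕ} (v : Fin (m+2) → ℝ)

/-- abbreviation for the projection CLM -/
noncomputable def Pj (m : ℕ) (k : Fin (m+2)) : (Fin (m+2) → ℝ) →L[ℝ] ℝ :=
  ContinuousLinearMap.proj k

lemma hinv (hv : v (Fin.last (m+1)) ≠ 0) :
    HasFDerivAt (fun w : Fin (m+2) → ℝ => (w (Fin.last (m+1)))⁻¹)
      ((-(v (Fin.last (m+1)) ^ 2)⁻¹) • Pj m (Fin.last (m+1))) v :=
  (hasDerivAt_inv hv).comp_hasFDerivAt v (Pj m (Fin.last (m+1))).hasFDerivAt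

lemma pd_last (hv : v (Fin.last (m+1)) ≠ 0) (i : Fin (m+2)) (hi : i.1 = m+1) (k : Fin (m+2)) :
    pdF k (vtil m i) v = (if k = Fin.last (m+1) then 1 else 0) / (v (Fin.last (m+1)))^2 := by
  have hfun : vtil m i = fun w => -((w (Fin.last (m+1)))⁻¹) := by
    funext w
    rw [vtil, if_neg (by omega), if_pos hi]
    ring
  rw [pdF, hfun, ((hinv v hv).fun_neg).fderiv]
  rcases eq_or_ne k (Fin.last (m+1)) with rfl | h
  · simp [Pj, Pi.single_apply]
  · simp [Pj, Pi.single_apply, h, Ne.symm h]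

lemma pd_mid (hv : v (Fin.last (m+1)) ≠ 0) (i : Fin (m+2)) (hi0 : i.1 ≠ 0)
    (hi1 : i.1 ≠ m+1) (k : Fin (m+2)) :
    pdF k (vtil m i) v = (if k = i then 1 else 0) / v (Fin.last (m+1))
      - (if k = Fin.last (m+1) then 1 else 0) * v i / (v (Fin.last (m+1)))^2 := by
  have hfun : vtil m i = fun w => w i * (w (Fin.last (m+1)))⁻¹ := by
    funext w
    rw [vtil, if_neg hi0, if_neg hi1, div_eq_mul_inv]
  have h : HasFDerivAt (fun y : Fin (m+2) → ℝ => y i * (y (Fin.last (m+1)))⁻¹)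
      (v i • ((-(v (Fin.last (m+1)) ^ 2)⁻¹) • Pj m (Fin.last (m+1)))
        + (v (Fin.last (m+1)))⁻¹ • Pj m i) v :=
    ((Pj m i).hasFDerivAt).mul (hinv v hv)
  rw [pdF, hfun, h.fderiv]
  have hil : i ≠ Fin.last (m+1) := by
    intro h; rw [h] at hi1; exact hi1 rfl
  rcases eq_or_ne k i with rfl | hk1
  · simp [Pj, Pi.single_apply, hil, Ne.symm hil]
  · rcases eq_or_ne k (Fin.last (m+1)) with rfl | hk2
    · simp [Pj, Pi.single_apply, hk1, Ne.symm hk1, hil, Ne.symm hil]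
      rw [div_eq_mul_inv]
    · simp [Pj, Pi.single_apply, hk1, hk2, Ne.symm hk1, Ne.symm hk2]

lemma pd_zero (hv : v (Fin.last (m+1)) ≠ 0) (i : Fin (m+2)) (hi : i.1 = 0) (k : Fin (m+2)) :
    pdF k (vtil m i) v = v (Fin.rev k) / v (Fin.last (m+1))
      - (if k = Fin.last (m+1) then 1 else 0)
          * ((∑ a, v a * v (Fin.rev a)) / (2 * (v (Fin.last (m+1)))^2)) := by
  have hfun : vtil m i
      = fun w => (∑ a, w a * w (Fin.rev a)) * (w (Fin.last (m+1)))⁻¹ * (2:ℝ)⁻¹ := by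
    funext w
    rw [vtil, if_pos hi, Qsum w, div_eq_mul_inv, mul_inv]
    ring
  have hS : HasFDerivAt (fun w : Fin (m+2) → ℝ => ∑ a, w a * w (Fin.rev a))
      (∑ a, (v a • Pj m (Fin.rev a) + v (Fin.rev a) • Pj m a)) v :=
    HasFDerivAt.fun_sum fun a _ => ((Pj m a).hasFDerivAt).mul ((Pj m (Fin.rev a)).hasFDerivAt)
  have h : HasFDerivAt
      (fun w : Fin (m+2) → ℝ => (∑ a, w a * w (Fin.rev a)) * (w (Fin.last (m+1)))⁻¹ * (2:ℝ)⁻¹)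
      (((2:ℝ)⁻¹) • ((∑ a, v a * v (Fin.rev a)) • ((-(v (Fin.last (m+1)) ^ 2)⁻¹) • Pj m (Fin.last (m+1)))
        + (v (Fin.last (m+1)))⁻¹ • (∑ a, (v a • Pj m (Fin.rev a) + v (Fin.rev a) • Pj m a)))) v :=
    (hS.mul (hinv v hv)).mul_const (2:ℝ)⁻¹
  rw [pdF, hfun, h.fderiv]
  rcases eq_or_ne k (Fin.last (m+1)) with rfl | hk
  · simp [Pj, Pi.single_apply, rev_eq_comm, Finset.sum_ite_eq', Finset.sum_add_distrib,
      ite_mul, mul_ite]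
    field_simp
    ring
  · simp [Pj, Pi.single_apply, rev_eq_comm, Finset.sum_ite_eq', Finset.sum_add_distrib,
      ite_mul, mul_ite, hk, Ne.symm hk]
    field_simp
    ring

end Stmt16Aux

/-- Under the inversion `v ↦ ṽ` the conformally rescaled contravariant metric
`(v^n)²η^{ij}` transforms back to the constant metric `η^{ij}`:
`Σ_{k,l} (∂ṽ^i/∂v^k)(∂ṽ^j/∂v^l)(v^n)²η^{kl} = η^{ij}` wherever `v^n ≠ 0`. -/
theorem stmt16 (m : ℕ) (v : Fin (m + 2) → ℝ) (hv : v (Fin.last (m + 1)) ≠ 0)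
    (i j : Fin (m + 2)) :
    (∑ k, ∑ l, pdF k (vtil m i) v * pdF l (vtil m j) v
        * ((v (Fin.last (m + 1))) ^ 2 * etaM (m + 2) k l))
      = etaM (m + 2) i j := by
  classical
  have hrev : ∀ a b : Fin (m+2), Fin.rev a = b ↔ a = Fin.rev b :=
    fun a b => Stmt16Aux.rev_eq_comm
  have hrl : Fin.rev (Fin.last (m+1)) = (0 : Fin (m+2)) := Fin.rev_last (m+1)
  have h0r : Fin.rev (0 : Fin (m+2)) = Fin.last (m+1) := by rw [← hrl, Fin.rev_rev]
  have hl0 : (0 : Fin (m+2)) ≠ Fin.last (m+1) := by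
    rw [Fin.ne_iff_vne]; simp
  have hetaij : etaM (m+2) i j = if i.1 + j.1 = m + 1 then 1 else 0 := rfl
  have hcol : (∑ k, ∑ l, pdF k (vtil m i) v * pdF l (vtil m j) v
        * ((v (Fin.last (m+1))) ^ 2 * etaM (m + 2) k l))
      = ∑ k, pdF k (vtil m i) v * pdF (Fin.rev k) (vtil m j) v * (v (Fin.last (m+1))) ^ 2 := by
    refine Finset.sum_congr rfl fun k _ => ?_
    simp only [Stmt16Aux.etaM_rev, mul_ite, ite_mul, mul_one, mul_zero, zero_mul,
      Finset.sum_ite_eq', Finset.mem_univ, if_true]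
  rw [hcol]
  have hkl : ∀ k : Fin (m+2), (Fin.rev k = Fin.last (m+1)) ↔ k = 0 := by
    intro k; rw [hrev, hrl]
  rcases eq_or_ne i.1 0 with hi0 | hi0
  · simp only [Stmt16Aux.pd_zero v hv i hi0]
    rcases eq_or_ne j.1 0 with hj0 | hj0
    · -- (0,0)
      simp only [Stmt16Aux.pd_zero v hv j hj0]
      have key : ∀ k : Fin (m+2),
          (v (Fin.rev k) / v (Fin.last (m+1)) - (if k = Fin.last (m+1) then 1 else 0)
              * ((∑ a, v a * v (Fin.rev a)) / (2 * v (Fin.last (m+1)) ^ 2)))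
            * (v (Fin.rev (Fin.rev k)) / v (Fin.last (m+1))
              - (if Fin.rev k = Fin.last (m+1) then 1 else 0)
              * ((∑ a, v a * v (Fin.rev a)) / (2 * v (Fin.last (m+1)) ^ 2)))
            * v (Fin.last (m+1)) ^ 2
          = v k * v (Fin.rev k)
            - ((if k = Fin.last (m+1) then 1 else 0) * ((∑ a, v a * v (Fin.rev a)) / 2))
            - ((if k = (0 : Fin (m+2)) then 1 else 0) * ((∑ a, v a * v (Fin.rev a)) / 2)) := by
        intro k
        simp only [Fin.rev_rev, hrev, hrl]
        rcases eq_or_ne k (Fin.last (m+1)) with rfl | hk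
        · simp [Ne.symm hl0, hrl]
          field_simp
        · rcases eq_or_ne k (0 : Fin (m+2)) with rfl | hk0
          · simp [hk, h0r]
            field_simp
          · simp [hk, hk0]
            field_simp
      rw [Finset.sum_congr rfl fun k _ => key k, Finset.sum_sub_distrib,
        Finset.sum_sub_distrib, hetaij, if_neg (by omega)]
      simp [ite_mul, Finset.sum_ite_eq']
      ring
    · rcases eq_or_ne j.1 (m+1) with hj1 | hj1
      · -- (0, last)
        simp only [Stmt16Aux.pd_last v hv j hj1]
        have key : ∀ k : Fin (m+2),
            (v (Fin.rev k) / v (Fin.last (m+1)) - (if k = Fin.last (m+1) then 1 else 0)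
                * ((∑ a, v a * v (Fin.rev a)) / (2 * v (Fin.last (m+1)) ^ 2)))
              * ((if Fin.rev k = Fin.last (m+1) then 1 else 0) / v (Fin.last (m+1)) ^ 2)
              * v (Fin.last (m+1)) ^ 2
            = if k = (0 : Fin (m+2)) then 1 else 0 := by
          intro k
          simp only [hrev, hrl]
          rcases eq_or_ne k (0 : Fin (m+2)) with rfl | hk
          · simp [hl0, h0r]
            field_simp
          · simp [hk]
        rw [Finset.sum_congr rfl fun k _ => key k, hetaij, if_pos (by omega)]
        simp
      · -- (0, mid)
        simp only [Stmt16Aux.pd_mid v hv j hj0 hj1]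
        have hjl : j ≠ Fin.last (m+1) := by
          rw [Fin.ne_iff_vne]; simpa using hj1
        have hrj0 : Fin.rev j ≠ 0 := by
          rw [Ne, hrev, h0r]; exact hjl
        have hrjl : Fin.rev j ≠ Fin.last (m+1) := by
          rw [Ne, hkl j]
          intro h; exact hj0 (by rw [h]; rfl)
        have key : ∀ k : Fin (m+2),
            (v (Fin.rev k) / v (Fin.last (m+1)) - (if k = Fin.last (m+1) then 1 else 0)
                * ((∑ a, v a * v (Fin.rev a)) / (2 * v (Fin.last (m+1)) ^ 2)))
              * ((if Fin.rev k = j then 1 else 0) / v (Fin.last (m+1))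
                - (if Fin.rev k = Fin.last (m+1) then 1 else 0) * v j / v (Fin.last (m+1)) ^ 2)
              * v (Fin.last (m+1)) ^ 2
            = (if k = Fin.rev j then 1 else 0) * v j
              + (if k = (0 : Fin (m+2)) then 1 else 0) * (-(v j)) := by
          intro k
          simp only [hrev, hrl]
          rcases eq_or_ne k (Fin.rev j) with rfl | hk
          · simp [hrj0, hrjl, Fin.rev_rev]
            field_simp
          · rcases eq_or_ne k (0 : Fin (m+2)) with rfl | hk0
            · simp [hk, Ne.symm hl0, h0r]
              field_simp
            · simp [hk, hk0]
        rw [Finset.sum_congr rfl fun k _ => key k, Finset.sum_add_distrib, hetaij,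
          if_neg (by omega)]
        simp [ite_mul, Finset.sum_ite_eq']
  · rcases eq_or_ne i.1 (m+1) with hi1 | hi1
    · simp only [Stmt16Aux.pd_last v hv i hi1]
      rcases eq_or_ne j.1 0 with hj0 | hj0
      · -- (last, 0)
        simp only [Stmt16Aux.pd_zero v hv j hj0]
        have key : ∀ k : Fin (m+2),
            ((if k = Fin.last (m+1) then 1 else 0) / v (Fin.last (m+1)) ^ 2)
              * (v (Fin.rev (Fin.rev k)) / v (Fin.last (m+1))
                - (if Fin.rev k = Fin.last (m+1) then 1 else 0)
                * ((∑ a, v a * v (Fin.rev a)) / (2 * v (Fin.last (m+1)) ^ 2)))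
              * v (Fin.last (m+1)) ^ 2
            = if k = Fin.last (m+1) then 1 else 0 := by
          intro k
          simp only [Fin.rev_rev, hrev, hrl]
          rcases eq_or_ne k (Fin.last (m+1)) with rfl | hk
          · simp [Ne.symm hl0]
            field_simp
          · simp [hk]
        rw [Finset.sum_congr rfl fun k _ => key k, hetaij, if_pos (by omega)]
        simp
      · rcases eq_or_ne j.1 (m+1) with hj1 | hj1
        · -- (last, last)
          simp only [Stmt16Aux.pd_last v hv j hj1]
          rw [hetaij, if_neg (by omega)]
          refine Finset.sum_eq_zero fun k _ => ?_
          rcases eq_or_ne k (Fin.last (m+1)) with rfl | hk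
          · simp [hrl, hl0]
          · simp [hk]
        · -- (last, mid)
          simp only [Stmt16Aux.pd_mid v hv j hj0 hj1]
          rw [hetaij, if_neg (by omega)]
          refine Finset.sum_eq_zero fun k _ => ?_
          rcases eq_or_ne k (Fin.last (m+1)) with rfl | hk
          · have h1 : (0 : Fin (m+2)) ≠ j := fun h => hj0 (by rw [← h]; rfl)
            simp [hrl, hl0, h1]
          · simp [hk]
    · simp only [Stmt16Aux.pd_mid v hv i hi0 hi1]
      have hil : i ≠ Fin.last (m+1) := by
        rw [Fin.ne_iff_vne]; simpa using hi1
      have hi0' : i ≠ 0 := by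
        rw [Fin.ne_iff_vne]; simpa using hi0
      rcases eq_or_ne j.1 0 with hj0 | hj0
      · -- (mid, 0)
        simp only [Stmt16Aux.pd_zero v hv j hj0]
        have hri : Fin.rev i ≠ Fin.last (m+1) := by
          rw [Ne, hkl i]; exact hi0'
        have key : ∀ k : Fin (m+2),
            ((if k = i then 1 else 0) / v (Fin.last (m+1))
              - (if k = Fin.last (m+1) then 1 else 0) * v i / v (Fin.last (m+1)) ^ 2)
              * (v (Fin.rev (Fin.rev k)) / v (Fin.last (m+1))
                - (if Fin.rev k = Fin.last (m+1) then 1 else 0)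
                * ((∑ a, v a * v (Fin.rev a)) / (2 * v (Fin.last (m+1)) ^ 2)))
              * v (Fin.last (m+1)) ^ 2
            = (if k = i then 1 else 0) * v i
              + (if k = Fin.last (m+1) then 1 else 0) * (-(v i)) := by
          intro k
          simp only [Fin.rev_rev, hrev, hrl]
          rcases eq_or_ne k i with rfl | hk
          · simp [hil, hi0']
            field_simp
          · rcases eq_or_ne k (Fin.last (m+1)) with rfl | hk0
            · simp [hk, Ne.symm hl0]
              field_simp
            · simp [hk, hk0]
        rw [Finset.sum_congr rfl fun k _ => key k, Finset.sum_add_distrib, hetaij,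
          if_neg (by omega)]
        simp [ite_mul, Finset.sum_ite_eq']
      · rcases eq_or_ne j.1 (m+1) with hj1 | hj1
        · -- (mid, last)
          simp only [Stmt16Aux.pd_last v hv j hj1]
          rw [hetaij, if_neg (by omega)]
          refine Finset.sum_eq_zero fun k _ => ?_
          rw [mul_eq_zero, mul_eq_zero]
          rcases eq_or_ne k (0 : Fin (m+2)) with rfl | hk
          · left; left; simp [Ne.symm hi0', hl0]
          · left; right; simp only [hrev, hrl]; simp [hk]
        · -- (mid, mid)
          simp only [Stmt16Aux.pd_mid v hv j hj0 hj1]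
          have hjl : j ≠ Fin.last (m+1) := by
            rw [Fin.ne_iff_vne]; simpa using hj1
          have hri : Fin.rev i ≠ Fin.last (m+1) := by
            rw [Ne, hkl i]; exact hi0'
          have key : ∀ k : Fin (m+2),
              ((if k = i then 1 else 0) / v (Fin.last (m+1))
                - (if k = Fin.last (m+1) then 1 else 0) * v i / v (Fin.last (m+1)) ^ 2)
                * ((if Fin.rev k = j then 1 else 0) / v (Fin.last (m+1))
                  - (if Fin.rev k = Fin.last (m+1) then 1 else 0) * v j
                    / v (Fin.last (m+1)) ^ 2)
                * v (Fin.last (m+1)) ^ 2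
              = if k = i then (if i = Fin.rev j then 1 else 0) else 0 := by
            intro k
            simp only [hrev, hrl]
            rcases eq_or_ne k i with rfl | hk
            · simp [hil, hi0']
              rcases eq_or_ne k (Fin.rev j) with rfl | hk2
              · simp
                field_simp
              · simp [hk2]
            · rcases eq_or_ne k (Fin.last (m+1)) with rfl | hk0
              · have h1 : Fin.last (m+1) ≠ Fin.rev j := by
                  rw [Ne, ← hrev]; intro h; exact hj0 (by rw [← h, hrl]; rfl)
                simp [hk, h1, Ne.symm hl0]
              · simp [hk, hk0]
          rw [Finset.sum_congr rfl fun k _ => key k, Finset.sum_ite_eq',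
            Stmt16Aux.etaM_rev]
          have hij : (i = Fin.rev j) ↔ (j = Fin.rev i) := by
            rw [← hrev, eq_comm]
          simp [hij]
end

section
/- In the differential polynomial algebra, for all f, g ∈ 𝒜 the Leibniz-type identity holds: p_{i,α,s}(f·g) = Σ_{t≥0} (−1)^t C(t+s,s) ( p_{i,α,s+t}(f)·∂^t(g) + ∂^t(f)·p_{i,α,s+t}(g) ). -/
open MvPolynomial Finset

variable {n : ℕ}

lemma totalDer_eq_sum {f : DP n} {S : Finset (Fin n × ℕ)} (hS : f.vars ⊆ S) :
    totalDer f = ∑ v ∈ S, X (v.1, v.2 + 1) * pderiv v f := by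
  rw [totalDer]
  exact Finset.sum_subset hS (fun v _ hv => by
    rw [pderiv_eq_zero_of_notMem_vars hv, mul_zero])

lemma totalDer_add (f g : DP n) : totalDer (f + g) = totalDer f + totalDer g := by
  rw [totalDer_eq_sum (S := f.vars ∪ g.vars) (vars_add_subset f g),
    totalDer_eq_sum (S := f.vars ∪ g.vars) subset_union_left,
    totalDer_eq_sum (S := f.vars ∪ g.vars) subset_union_right, ← Finset.sum_add_distrib]
  exact Finset.sum_congr rfl fun v _ => by rw [map_add, mul_add]

noncomputable def TDa {n : ℕ} : DP n →+ DP n := AddMonoidHom.mk' totalDer totalDer_add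

@[simp] lemma TDa_apply (f : DP n) : TDa f = totalDer f := rfl

lemma totalDer_zero : totalDer (0 : DP n) = 0 := by
  simp [totalDer, vars_0]

lemma iter_zero (t : ℕ) : totalDer^[t] (0 : DP n) = 0 := by
  induction t with
  | zero => rfl
  | succ t ih => rw [Function.iterate_succ_apply, totalDer_zero, ih]

lemma iter_add (t : ℕ) (f g : DP n) :
    totalDer^[t] (f + g) = totalDer^[t] f + totalDer^[t] g := by
  induction t generalizing f g with
  | zero => rfl
  | succ t ih => rw [Function.iterate_succ_apply, totalDer_add, ih,
      Function.iterate_succ_apply, Function.iterate_succ_apply]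

lemma totalDer_mul (f g : DP n) : totalDer (f * g) = totalDer f * g + f * totalDer g := by
  rw [totalDer_eq_sum (S := f.vars ∪ g.vars) (vars_mul f g),
    totalDer_eq_sum (S := f.vars ∪ g.vars) (subset_union_left (s₂ := g.vars)),
    totalDer_eq_sum (S := f.vars ∪ g.vars) (subset_union_right (s₁ := f.vars)),
    Finset.sum_mul, Finset.mul_sum, ← Finset.sum_add_distrib]
  exact Finset.sum_congr rfl fun v _ => by rw [pderiv_mul]; ring

lemma iter_nsmul (t k : ℕ) (f : DP n) :
    totalDer^[t] (k • f) = k • totalDer^[t] f := by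
  induction t generalizing f with
  | zero => rfl
  | succ t ih =>
    rw [Function.iterate_succ_apply, Function.iterate_succ_apply, ← TDa_apply,
      map_nsmul, TDa_apply, ih]

lemma iter_mul (t : ℕ) (f g : DP n) :
    totalDer^[t] (f * g) =
      ∑ k ∈ range (t + 1), t.choose k • (totalDer^[t - k] f * totalDer^[k] g) := by
  induction t with
  | zero => simp [Finset.range]
  | succ t IH =>
    calc
      totalDer^[t + 1] (f * g) =
          totalDer (∑ k ∈ range (t + 1),
              t.choose k • (totalDer^[t - k] f * totalDer^[k] g)) := by
        rw [Function.iterate_succ_apply', IH]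
      _ = (∑ k ∈ range (t + 1),
            t.choose k • (totalDer^[t - k + 1] f * totalDer^[k] g)) +
          ∑ k ∈ range (t + 1),
            t.choose k • (totalDer^[t - k] f * totalDer^[k + 1] g) := by
        rw [← TDa_apply, map_sum]
        simp_rw [map_nsmul, TDa_apply, totalDer_mul, Function.iterate_succ_apply',
          smul_add, sum_add_distrib]
      _ = (∑ k ∈ range (t + 1),
                t.choose (k + 1) • (totalDer^[t - k] f * totalDer^[k + 1] g)) +
              1 • (totalDer^[t + 1] f * totalDer^[0] g) +
            ∑ k ∈ range (t + 1), t.choose k • (totalDer^[t - k] f * totalDer^[k + 1] g) := ?_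
      _ = ((∑ k ∈ range (t + 1), t.choose k • (totalDer^[t - k] f * totalDer^[k + 1] g)) +
              ∑ k ∈ range (t + 1),
                t.choose (k + 1) • (totalDer^[t - k] f * totalDer^[k + 1] g)) +
            1 • (totalDer^[t + 1] f * totalDer^[0] g) := by
        rw [add_comm, add_assoc]
      _ = (∑ i ∈ range (t + 1),
              (t + 1).choose (i + 1) • (totalDer^[t + 1 - (i + 1)] f * totalDer^[i + 1] g)) +
            1 • (totalDer^[t + 1] f * totalDer^[0] g) := by
        simp_rw [Nat.choose_succ_succ, Nat.succ_sub_succ, add_smul, sum_add_distrib]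
      _ = ∑ k ∈ range (t + 1 + 1),
            (t + 1).choose k • (totalDer^[t + 1 - k] f * totalDer^[k] g) := by
        rw [sum_range_succ' _ (t + 1), Nat.choose_zero_right, tsub_zero]
    congr
    refine (sum_range_succ' _ _).trans (congr_arg₂ (· + ·) ?_ ?_)
    · rw [sum_range_succ, Nat.choose_succ_self, zero_smul, add_zero]
      refine sum_congr rfl fun k hk => ?_
      rw [mem_range] at hk
      have : t - (k + 1) + 1 = t - k := by omega
      rw [this]
    · rw [Nat.choose_zero_right, tsub_zero]

lemma pderiv_high {f : DP n} {i : Fin n} {k : ℕ} (hk : vbound f ≤ k) :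
    pderiv (i, k) f = 0 := by
  apply pderiv_eq_zero_of_notMem_vars
  intro h
  have h2 := Finset.le_sup (f := fun v : Fin n × ℕ => v.2) h
  simp only [vbound] at hk
  simp only at h2
  omega

lemma pmom_eq {f : DP n} {N : ℕ} (hN : vbound f ≤ N) (i : Fin n) (α s : ℕ) :
    pmom i α s f = ∑ t ∈ Finset.range N,
      ((-1 : ℝ) ^ t * (Nat.choose (t + s) s : ℝ)) •
        totalDer^[t] (pderiv (i, α + s + t) f) := by
  refine Finset.sum_subset (Finset.range_subset_range.2 hN) (fun t _ ht => ?_)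
  rw [Finset.mem_range, not_lt] at ht
  rw [pderiv_high (by omega), iter_zero, smul_zero]

lemma vbound_mul_le (f g : DP n) : vbound (f * g) ≤ vbound f + vbound g := by
  have h := Finset.sup_mono (f := fun v : Fin n × ℕ => v.2) (vars_mul f g)
  rw [Finset.sup_union] at h
  simp only [vbound]
  rcases max_cases (f.vars.sup fun v => v.2) (g.vars.sup fun v => v.2) with ⟨h1,_⟩|⟨h1,_⟩ <;>
    rw [h1] at h <;> omega

lemma sum_tri {M : Type*} [AddCommMonoid M] (N : ℕ) (f : ℕ → ℕ → M)
    (hf : ∀ t r, N ≤ t + r → f t r = 0) :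
    ∑ m ∈ Finset.range N, ∑ k ∈ Finset.range (m + 1), f k (m - k)
      = ∑ t ∈ Finset.range N, ∑ r ∈ Finset.range N, f t r := by
  have h1 : ∀ m, ∑ k ∈ Finset.range (m + 1), f k (m - k)
      = ∑ p ∈ Finset.HasAntidiagonal.antidiagonal m, f p.1 p.2 := fun m =>
    (Finset.Nat.sum_antidiagonal_eq_sum_range_succ_mk (fun p => f p.1 p.2) m).symm
  simp_rw [h1]
  rw [← Finset.sum_biUnion]
  · rw [← Finset.sum_product']
    have h2 : (Finset.range N).biUnion (fun m => Finset.HasAntidiagonal.antidiagonal m)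
        = (Finset.range N ×ˢ Finset.range N).filter (fun p => p.1 + p.2 < N) := by
      ext p
      simp only [Finset.mem_biUnion, Finset.mem_range, Finset.HasAntidiagonal.mem_antidiagonal,
        Finset.mem_filter, Finset.mem_product]
      constructor
      · rintro ⟨m, hm, h⟩; omega
      · rintro ⟨_, h⟩; exact ⟨p.1 + p.2, h, rfl⟩
    rw [h2]
    exact Finset.sum_filter_of_ne (fun p _ hp => by
      by_contra h; push_neg at h; exact hp (hf p.1 p.2 h))
  · intro a _ b _ hab
    simp only [Finset.disjoint_left, Finset.HasAntidiagonal.mem_antidiagonal]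
    intro p hp hq; exact hab (hp ▸ hq)

lemma choose_id (s a b : ℕ) :
    ((a + b + s).choose s : ℝ) * ((a + b).choose a : ℝ)
      = ((a + s).choose s : ℝ) * ((a + b + s).choose (s + a) : ℝ) := by
  rw [Nat.cast_choose ℝ (by omega : s ≤ a + b + s),
    Nat.cast_choose ℝ (by omega : a ≤ a + b),
    Nat.cast_choose ℝ (by omega : s ≤ a + s),
    Nat.cast_choose ℝ (by omega : s + a ≤ a + b + s)]
  have e1 : a + b + s - s = a + b := by omega
  have e2 : a + b - a = b := by omega
  have e3 : a + s - s = a := by omega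
  have e4 : a + b + s - (s + a) = b := by omega
  rw [e1, e2, e3, e4]
  have f1 : (Nat.factorial s : ℝ) ≠ 0 := Nat.cast_ne_zero.2 (Nat.factorial_ne_zero s)
  have f2 : (Nat.factorial a : ℝ) ≠ 0 := Nat.cast_ne_zero.2 (Nat.factorial_ne_zero a)
  have f3 : (Nat.factorial b : ℝ) ≠ 0 := Nat.cast_ne_zero.2 (Nat.factorial_ne_zero b)
  have f4 : (Nat.factorial (a + b) : ℝ) ≠ 0 := Nat.cast_ne_zero.2 (Nat.factorial_ne_zero _)
  have f5 : (Nat.factorial (s + a) : ℝ) ≠ 0 := Nat.cast_ne_zero.2 (Nat.factorial_ne_zero _)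
  have e5 : s + a = a + s := by omega
  rw [e5]
  field_simp

lemma key (s t r : ℕ) :
    ((-1 : ℝ) ^ (t + r) * ((t + r + s).choose s : ℝ)) * ((t + r).choose t : ℝ)
      = ((-1 : ℝ) ^ t * ((t + s).choose s : ℝ))
          * ((-1 : ℝ) ^ r * ((r + (s + t)).choose (s + t) : ℝ)) := by
  have h := choose_id s t r
  have e : r + (s + t) = t + r + s := by omega
  rw [e, pow_add]
  linear_combination ((-1 : ℝ) ^ t * (-1 : ℝ) ^ r) * h

/-- coefficient shorthand -/
noncomputable def cc (t s : ℕ) : ℝ := (-1 : ℝ) ^ t * ((t + s).choose s : ℝ)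

lemma key' (s t r : ℕ) : cc (t + r) s * ((t + r).choose t : ℝ) = cc t s * cc r (s + t) :=
  key s t r

lemma partA (i : Fin n) (α s : ℕ) (f g : DP n) (N : ℕ) (hNf : vbound f ≤ N) :
    ∑ m ∈ Finset.range N, cc m s • totalDer^[m] (pderiv (i, α + s + m) f * g)
      = ∑ t ∈ Finset.range N, ∑ r ∈ Finset.range N,
          (cc t s * cc r (s + t)) •
            (totalDer^[r] (pderiv (i, α + (s + t) + r) f) * totalDer^[t] g) := by
  have step1 : ∀ m ∈ Finset.range N,
      cc m s • totalDer^[m] (pderiv (i, α + s + m) f * g)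
        = ∑ k ∈ Finset.range (m + 1),
            (cc k s * cc (m - k) (s + k)) •
              (totalDer^[m - k] (pderiv (i, α + (s + k) + (m - k)) f) * totalDer^[k] g) := by
    intro m _
    rw [iter_mul, Finset.smul_sum]
    refine Finset.sum_congr rfl fun k hk => ?_
    rw [Finset.mem_range] at hk
    have hk' : k ≤ m := by omega
    rw [← Nat.cast_smul_eq_nsmul ℝ, smul_smul]
    have h1 : α + s + m = α + (s + k) + (m - k) := by omega
    have h2 : cc m s * ((m.choose k : ℕ) : ℝ) = cc k s * cc (m - k) (s + k) := by
      have h := key' s k (m - k)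
      have e : k + (m - k) = m := by omega
      rw [e] at h
      exact h
    rw [h1, h2]
  rw [Finset.sum_congr rfl step1]
  exact sum_tri N
    (fun t r => (cc t s * cc r (s + t)) •
      (totalDer^[r] (pderiv (i, α + (s + t) + r) f) * totalDer^[t] g))
    (fun t r htr => by
      have h3 : pderiv (i, α + (s + t) + r) f = 0 := pderiv_high (by omega)
      simp only [h3, iter_zero, zero_mul, smul_zero])

lemma partB (i : Fin n) (α s : ℕ) (f g : DP n) (N : ℕ) (hNg : vbound g ≤ N) :
    ∑ m ∈ Finset.range N, cc m s • totalDer^[m] (f * pderiv (i, α + s + m) g)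
      = ∑ t ∈ Finset.range N, ∑ r ∈ Finset.range N,
          (cc t s * cc r (s + t)) •
            (totalDer^[t] f * totalDer^[r] (pderiv (i, α + (s + t) + r) g)) := by
  have step1 : ∀ m ∈ Finset.range N,
      cc m s • totalDer^[m] (f * pderiv (i, α + s + m) g)
        = ∑ k ∈ Finset.range (m + 1),
            (cc (m - k) s * cc k (s + (m - k))) •
              (totalDer^[m - k] f * totalDer^[k] (pderiv (i, α + (s + (m - k)) + k) g)) := by
    intro m _
    rw [iter_mul, Finset.smul_sum]
    refine Finset.sum_congr rfl fun k hk => ?_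
    rw [Finset.mem_range] at hk
    have hk' : k ≤ m := by omega
    rw [← Nat.cast_smul_eq_nsmul ℝ, smul_smul]
    have h1 : α + s + m = α + (s + (m - k)) + k := by omega
    have h2 : cc m s * ((m.choose k : ℕ) : ℝ) = cc (m - k) s * cc k (s + (m - k)) := by
      have h := key' s (m - k) k
      have e : m - k + k = m := by omega
      rw [e] at h
      rw [← h]
      congr 1
      exact_mod_cast (Nat.choose_symm hk').symm
    rw [h1, h2]
  rw [Finset.sum_congr rfl step1]
  have := sum_tri N
    (fun k t => (cc t s * cc k (s + t)) •
      (totalDer^[t] f * totalDer^[k] (pderiv (i, α + (s + t) + k) g)))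
    (fun k t hkt => by
      have h3 : pderiv (i, α + (s + t) + k) g = 0 := pderiv_high (by omega)
      simp only [h3, iter_zero, mul_zero, smul_zero])
  rw [this]
  exact Finset.sum_comm


/-- Leibniz-type identity for the higher generalized momentum operators:
`p_{i,α,s}(f·g) = Σ_t (-1)^t C(t+s,s) ( p_{i,α,s+t}(f)·∂^t(g) + ∂^t(f)·p_{i,α,s+t}(g) )`
(the sum is finite; it is truncated at a sufficiently large bound). -/
theorem stmt17 {n : ℕ} (i : Fin n) (α s : ℕ) (f g : DP n) :
    pmom i α s (f * g) =
      ∑ t ∈ Finset.range (vbound f + vbound g),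
        ((-1 : ℝ) ^ t * (Nat.choose (t + s) s : ℝ)) •
          (pmom i α (s + t) f * totalDer^[t] g + totalDer^[t] f * pmom i α (s + t) g) := by
  set N := vbound f + vbound g with hN
  have hNf : vbound f ≤ N := Nat.le_add_right _ _
  have hNg : vbound g ≤ N := Nat.le_add_left _ _
  have hcc : ∀ t s : ℕ, ((-1 : ℝ) ^ t * ((t + s).choose s : ℝ)) = cc t s := fun _ _ => rfl
  rw [pmom_eq (vbound_mul_le f g) i α s]
  simp_rw [hcc, pderiv_mul, iter_add, smul_add]
  rw [Finset.sum_add_distrib, partA i α s f g N hNf, partB i α s f g N hNg]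
  have hrF : ∀ t ∈ Finset.range N,
      cc t s • (pmom i α (s + t) f * totalDer^[t] g)
        = ∑ r ∈ Finset.range N, (cc t s * cc r (s + t)) •
              (totalDer^[r] (pderiv (i, α + (s + t) + r) f) * totalDer^[t] g) := by
    intro t _
    rw [pmom_eq hNf i α (s + t)]
    simp_rw [hcc]
    rw [Finset.sum_mul, Finset.smul_sum]
    exact Finset.sum_congr rfl fun r _ => by rw [smul_mul_assoc, smul_smul]
  have hrG : ∀ t ∈ Finset.range N,
      cc t s • (totalDer^[t] f * pmom i α (s + t) g)
        = ∑ r ∈ Finset.range N, (cc t s * cc r (s + t)) •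
              (totalDer^[t] f * totalDer^[r] (pderiv (i, α + (s + t) + r) g)) := by
    intro t _
    rw [pmom_eq hNg i α (s + t)]
    simp_rw [hcc]
    rw [Finset.mul_sum, Finset.smul_sum]
    exact Finset.sum_congr rfl fun r _ => by rw [mul_smul_comm, smul_smul]
  rw [Finset.sum_add_distrib, Finset.sum_congr rfl hrF, Finset.sum_congr rfl hrG]
end
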